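/- arXiv:1910.14371 — 5 statements merged into one kernel-verified Lean document; each statement's English description precedes it below -/
import Mathlib

section
/- Let c > 0, let ψ ∈ W^{2,∞}(𝕋), and let u be a classical solution of the temperature problem for (c,ψ). Then the function x ↦ min{ u(x,y) : y ∈ 𝕋, x ≤ ψ(y) } is nondecreasing on the interval (−∞, max_𝕋 ψ]. (Monotonicity of the minimal temperature in the direction of propagation.) -/
open MeasureTheory Set Filter
open scoped NNReal

noncomputable section

/-- The open fresh region `Ω_ψ = {(x,y) : x < ψ(y)}`.  Functions on the torus `𝕋 = ℝ/ℤ`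
are identified with 1-periodic functions on `ℝ`, so `Ω_ψ ⊆ ℝ × ℝ`. -/
def Omega (ψ : ℝ → ℝ) : Set (ℝ × ℝ) := {p | p.1 < ψ p.2}

/-- The closure of `Ω_ψ`, i.e. `{(x,y) : x ≤ ψ(y)}`. -/
def OmegaCl (ψ : ℝ → ℝ) : Set (ℝ × ℝ) := {p | p.1 ≤ ψ p.2}

/-- Partial derivative in the `x`-direction. -/
def pdx (u : ℝ × ℝ → ℝ) (p : ℝ × ℝ) : ℝ := fderiv ℝ u p (1, 0)

/-- Partial derivative in the `y`-direction. -/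
def pdy (u : ℝ × ℝ → ℝ) (p : ℝ × ℝ) : ℝ := fderiv ℝ u p (0, 1)

/-- Laplacian. -/
def lap (u : ℝ × ℝ → ℝ) (p : ℝ × ℝ) : ℝ := pdx (pdx u) p + pdy (pdy u) p

/-- `ψ ∈ W^{2,∞}(𝕋)`: a 1-periodic `C¹` function with Lipschitz derivative;
its a.e. second derivative is `deriv (deriv ψ)`. -/
structure W2infPer (ψ : ℝ → ℝ) : Prop where
  periodic : Function.Periodic ψ 1
  contDiff : ContDiff ℝ 1 ψ
  lipDeriv : ∃ L : ℝ≥0, LipschitzWith L (deriv ψ)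

/-- A classical solution `u` of the temperature problem for `(c, ψ)`:
1-periodic in `y`, continuous on the closure of `Ω_ψ`, `C²` inside, `C¹` up to the
boundary, with finite energy `∫_{Ω_ψ} (u² + |∇u|²) < ∞` (one period in `y`),
satisfying `c uₓ - Δu = 0` in `Ω_ψ`, the Neumann condition
`∂u/∂ν = c/√(1+ψ'²)` on `{x = ψ(y)}` (where `ν = (1, -ψ')/√(1+ψ'²)`),
and `u → 0` uniformly in `y` as `x → -∞`. -/
structure IsTempSol (c : ℝ) (ψ : ℝ → ℝ) (u : ℝ × ℝ → ℝ) : Prop where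
  periodic : ∀ x y : ℝ, u (x, y + 1) = u (x, y)
  contOn : ContinuousOn u (OmegaCl ψ)
  c2 : ContDiffOn ℝ 2 u (Omega ψ)
  c1 : ContDiffOn ℝ 1 u (OmegaCl ψ)
  pde : ∀ p ∈ Omega ψ, c * pdx u p - lap u p = 0
  bc : ∀ y : ℝ,
    fderivWithin ℝ u (OmegaCl ψ) (ψ y, y) (1, -deriv ψ y) / Real.sqrt (1 + deriv ψ y ^ 2)
      = c / Real.sqrt (1 + deriv ψ y ^ 2)
  energy : IntegrableOn (fun p => u p ^ 2 + ‖fderiv ℝ u p‖ ^ 2)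
      (Omega ψ ∩ {p : ℝ × ℝ | p.2 ∈ Ico (0 : ℝ) 1})
  decay : ∀ ε > 0, ∃ X : ℝ, ∀ p ∈ OmegaCl ψ, p.1 ≤ X → |u p| ≤ ε


-- Auxiliary lemmas --


/-- If `f` has (within) derivative `d` at the left endpoint `0` of `[0,δ]` and `f 0` is
a minimum of `f` on `[0,δ]`, then `0 ≤ d`. -/
lemma deriv_nonneg_of_isMinOn_Icc {f : ℝ → ℝ} {d δ : ℝ} (hδ : 0 < δ)
    (hf : HasDerivWithinAt f d (Icc 0 δ) 0)
    (hmin : ∀ t ∈ Icc (0:ℝ) δ, f 0 ≤ f t) : 0 ≤ d := by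
  rw [hasDerivWithinAt_iff_tendsto_slope] at hf
  rw [show Icc (0:ℝ) δ \ {0} = Ioc 0 δ from Set.Icc_diff_left,
    nhdsWithin_Ioc_eq_nhdsGT hδ] at hf
  refine ge_of_tendsto hf ?_
  filter_upwards [Ioc_mem_nhdsGT_of_mem (show (0:ℝ) ∈ Ico (0:ℝ) δ from ⟨le_refl _, hδ⟩)]
    with t ht
  rw [slope_def_field]
  apply div_nonneg
  · exact sub_nonneg.2 (hmin t ⟨le_of_lt ht.1, ht.2⟩)
  · simpa using le_of_lt ht.1

/-- Second derivative test: at a local minimum the second derivative is nonnegative. -/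
lemma second_deriv_nonneg_of_isLocalMin {f : ℝ → ℝ} {a D : ℝ}
    (hmin : IsLocalMin f a)
    (hd : ∀ᶠ x in nhds a, DifferentiableAt ℝ f x)
    (hD : HasDerivAt (deriv f) D a) : 0 ≤ D := by
  by_contra hneg
  push_neg at hneg
  have h0 : deriv f a = 0 := hmin.deriv_eq_zero
  have hslope : Tendsto (slope (deriv f) a) (nhdsWithin a {a}ᶜ) (nhds D) :=
    hasDerivAt_iff_tendsto_slope.1 hD
  have hslope' : Tendsto (slope (deriv f) a) (nhdsWithin a (Ioi a)) (nhds D) :=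
    hslope.mono_left (nhdsWithin_mono a (fun x hx => ne_of_gt hx))
  have hev : ∀ᶠ t in nhdsWithin a (Ioi a), slope (deriv f) a t < 0 :=
    hslope'.eventually (gt_mem_nhds hneg)
  have hev' : ∀ᶠ t in nhdsWithin a (Ioi a), deriv f t < 0 := by
    filter_upwards [hev, self_mem_nhdsWithin] with t ht ht'
    rw [slope_def_field, h0, sub_zero] at ht
    have htpos : 0 < t - a := sub_pos.2 ht'
    by_contra hge
    push_neg at hge
    exact absurd ht (not_lt.2 (div_nonneg hge (le_of_lt htpos)))
  obtain ⟨δ, hδ, hIoc⟩ := mem_nhdsGT_iff_exists_Ioc_subset.1 hev'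
  obtain ⟨r, hr, hball⟩ := Metric.eventually_nhds_iff.1 (hd.and hmin)
  set η := min (δ - a) (r / 2) with hη
  have hηpos : 0 < η := lt_min (sub_pos.2 hδ) (by linarith)
  have hIcc : Icc a (a + η) ⊆ Metric.ball a r := by
    intro x hx
    rw [Metric.mem_ball, Real.dist_eq, abs_sub_lt_iff]
    constructor
    · have := hx.2
      have : x - a ≤ η := by linarith
      have : η ≤ r / 2 := min_le_right _ _
      linarith [hx.1, hx.2, min_le_right (δ - a) (r / 2)]
    · linarith [hx.1]
  have hanti : StrictAntiOn f (Icc a (a + η)) := by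
    apply strictAntiOn_of_deriv_neg (convex_Icc _ _)
    · intro x hx
      exact ((hball (Metric.mem_ball.1 (hIcc hx))).1).continuousAt.continuousWithinAt
    · intro x hx
      rw [interior_Icc] at hx
      refine hIoc ⟨hx.1, ?_⟩
      have : η ≤ δ - a := min_le_left _ _
      linarith [hx.2]
  have h1 : f (a + η) < f a :=
    hanti (left_mem_Icc.2 (by linarith)) (right_mem_Icc.2 (by linarith)) (by linarith)
  have h2 : f a ≤ f (a + η) :=
    (hball (Metric.mem_ball.1 (hIcc (right_mem_Icc.2 (by linarith))))).2
  linarith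

lemma expx_hasDerivAt (ε α t : ℝ) :
    HasDerivAt (fun x : ℝ => ε * Real.exp (α * x)) (ε * α * Real.exp (α * t)) t := by
  have h := (((hasDerivAt_id t).const_mul α).exp).const_mul ε
  refine h.congr_deriv ?_
  simp only [id]
  ring

lemma expx_hasFDerivAt (ε α : ℝ) (q : ℝ × ℝ) :
    HasFDerivAt (fun q : ℝ × ℝ => ε * Real.exp (α * q.1))
      ((ε * α * Real.exp (α * q.1)) • ContinuousLinearMap.fst ℝ ℝ ℝ) q := by
  have h := ((expx_hasDerivAt ε α q.1).hasFDerivAt).comp q hasFDerivAt_fst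
  refine h.congr_fderiv ?_
  apply ContinuousLinearMap.ext
  intro v
  simp [mul_comm]

lemma expx_diff (ε α : ℝ) (q : ℝ × ℝ) :
    DifferentiableAt ℝ (fun q : ℝ × ℝ => ε * Real.exp (α * q.1)) q :=
  (expx_hasFDerivAt ε α q).differentiableAt

lemma expx_pdx (ε α : ℝ) :
    pdx (fun q : ℝ × ℝ => ε * Real.exp (α * q.1)) = fun q => ε * α * Real.exp (α * q.1) := by
  funext q
  rw [pdx, (expx_hasFDerivAt ε α q).fderiv]
  simp

lemma expx_pdy (ε α : ℝ) :
    pdy (fun q : ℝ × ℝ => ε * Real.exp (α * q.1)) = fun _ => 0 := by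
  funext q
  rw [pdy, (expx_hasFDerivAt ε α q).fderiv]
  simp

lemma expx_fderiv_apply (ε α : ℝ) (q : ℝ × ℝ) (w : ℝ × ℝ) :
    fderiv ℝ (fun q : ℝ × ℝ => ε * Real.exp (α * q.1)) q w
      = ε * α * Real.exp (α * q.1) * w.1 := by
  rw [(expx_hasFDerivAt ε α q).fderiv]; simp

/-- Interior case: a local minimum of `v = u + ε e^{αx}` inside `Ω` is impossible. -/
lemma interior_case {c : ℝ} {ψ : ℝ → ℝ} {u : ℝ × ℝ → ℝ}
    (hc : 0 < c) (hψc : Continuous ψ) (hu : IsTempSol c ψ u)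
    {ε α : ℝ} (hε : 0 < ε) (hα : 0 < α) (hαc : α < c)
    {p : ℝ × ℝ} (hp : p ∈ Omega ψ)
    (hmin : IsLocalMin (fun r : ℝ × ℝ => u r + ε * Real.exp (α * r.1)) p) : False := by
  set v : ℝ × ℝ → ℝ := fun r => u r + ε * Real.exp (α * r.1) with hv
  have hopen : IsOpen (Omega ψ) := isOpen_lt continuous_fst (hψc.comp continuous_snd)
  have hud : ∀ q ∈ Omega ψ, DifferentiableAt ℝ u q := fun q hq =>
    (hu.c2.differentiableOn (by norm_num)).differentiableAt (hopen.mem_nhds hq)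
  have hfd1 : ContDiffOn ℝ 1 (fderiv ℝ u) (Omega ψ) :=
    hu.c2.fderiv_of_isOpen hopen (by norm_num)
  have hfd1' : DifferentiableAt ℝ (fderiv ℝ u) p :=
    (hfd1.differentiableOn one_ne_zero).differentiableAt (hopen.mem_nhds hp)
  have hpdxu_diff : DifferentiableAt ℝ (pdx u) p := by
    show DifferentiableAt ℝ (fun q => fderiv ℝ u q (1, 0)) p
    exact hfd1'.clm_apply (differentiableAt_const _)
  have hpdyu_diff : DifferentiableAt ℝ (pdy u) p := by
    show DifferentiableAt ℝ (fun q => fderiv ℝ u q (0, 1)) p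
    exact hfd1'.clm_apply (differentiableAt_const _)
  -- pdx/pdy of v on Omega
  have hpdxv : ∀ q ∈ Omega ψ, pdx v q = pdx u q + ε * α * Real.exp (α * q.1) := by
    intro q hq
    show fderiv ℝ v q (1, 0) = _
    rw [hv, fderiv_fun_add (hud q hq) (expx_diff ε α q)]
    rw [ContinuousLinearMap.add_apply]
    rw [show (fderiv ℝ (fun q : ℝ × ℝ => ε * Real.exp (α * q.1)) q) (1,0)
      = ε * α * Real.exp (α * q.1) * (1:ℝ) from expx_fderiv_apply ε α q (1,0)]
    simp only [mul_one]
    rfl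
  have hpdyv : ∀ q ∈ Omega ψ, pdy v q = pdy u q := by
    intro q hq
    show fderiv ℝ v q (0, 1) = _
    rw [hv, fderiv_fun_add (hud q hq) (expx_diff ε α q)]
    rw [ContinuousLinearMap.add_apply]
    rw [show (fderiv ℝ (fun q : ℝ × ℝ => ε * Real.exp (α * q.1)) q) (0,1)
      = ε * α * Real.exp (α * q.1) * (0:ℝ) from expx_fderiv_apply ε α q (0,1)]
    simp only [mul_zero, add_zero]
    rfl
  have hvdiff : ∀ q ∈ Omega ψ, DifferentiableAt ℝ v q := fun q hq =>
    (hud q hq).add (expx_diff ε α q)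
  -- the two coordinate curves
  set ι₁ : ℝ → ℝ × ℝ := fun t => (t, p.2) with hι₁def
  set ι₂ : ℝ → ℝ × ℝ := fun t => (p.1, t) with hι₂def
  have hι₁ : ∀ t : ℝ, HasDerivAt ι₁ ((1 : ℝ), (0 : ℝ)) t := fun t =>
    (hasDerivAt_id t).prodMk (hasDerivAt_const t p.2)
  have hι₂ : ∀ t : ℝ, HasDerivAt ι₂ ((0 : ℝ), (1 : ℝ)) t := fun t =>
    (hasDerivAt_const t p.1).prodMk (hasDerivAt_id t)
  have hι₁c : Continuous ι₁ := by fun_prop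
  have hι₂c : Continuous ι₂ := by fun_prop
  have hpre₁ : {t : ℝ | (t, p.2) ∈ Omega ψ} ∈ nhds p.1 := by
    have : IsOpen (ι₁ ⁻¹' Omega ψ) := hopen.preimage hι₁c
    exact this.mem_nhds (by simpa [hι₁def] using hp)
  have hpre₂ : {t : ℝ | (p.1, t) ∈ Omega ψ} ∈ nhds p.2 := by
    have : IsOpen (ι₂ ⁻¹' Omega ψ) := hopen.preimage hι₂c
    exact this.mem_nhds (by simpa [hι₂def] using hp)
  set f₁ : ℝ → ℝ := fun t => v (t, p.2) with hf₁def
  set f₂ : ℝ → ℝ := fun t => v (p.1, t) with hf₂def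
  have heta : (p.1, p.2) = p := Prod.mk.eta
  have hminf₁ : IsLocalMin f₁ p.1 := by
    have ht : Tendsto ι₁ (nhds p.1) (nhds p) := by
      have := hι₁c.tendsto p.1
      simpa [hι₁def, heta] using this
    have hmin' : IsMinFilter v (nhds p) (ι₁ p.1) := by
      show IsMinFilter v (nhds p) (p.1, p.2)
      rw [heta]; exact hmin
    exact hmin'.comp_tendsto ht
  have hminf₂ : IsLocalMin f₂ p.2 := by
    have ht : Tendsto ι₂ (nhds p.2) (nhds p) := by
      have := hι₂c.tendsto p.2
      simpa [hι₂def, heta] using this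
    have hmin' : IsMinFilter v (nhds p) (ι₂ p.2) := by
      show IsMinFilter v (nhds p) (p.1, p.2)
      rw [heta]; exact hmin
    exact hmin'.comp_tendsto ht
  have hf₁diff : ∀ᶠ t in nhds p.1, DifferentiableAt ℝ f₁ t := by
    filter_upwards [hpre₁] with t ht
    exact (hvdiff _ ht).comp t (hι₁ t).differentiableAt
  have hf₂diff : ∀ᶠ t in nhds p.2, DifferentiableAt ℝ f₂ t := by
    filter_upwards [hpre₂] with t ht
    exact (hvdiff _ ht).comp t (hι₂ t).differentiableAt
  have hderiv_f₁ : ∀ᶠ t in nhds p.1, deriv f₁ t = pdx v (t, p.2) := by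
    filter_upwards [hpre₁] with t ht
    have := ((hvdiff _ ht).hasFDerivAt).comp_hasDerivAt t (hι₁ t)
    exact this.deriv
  have hderiv_f₂ : ∀ᶠ t in nhds p.2, deriv f₂ t = pdy v (p.1, t) := by
    filter_upwards [hpre₂] with t ht
    have := ((hvdiff _ ht).hasFDerivAt).comp_hasDerivAt t (hι₂ t)
    exact this.deriv
  -- first derivative vanishes in x
  have hpdxv0 : pdx v p = 0 := by
    have h0 := hminf₁.deriv_eq_zero
    have h1 := hderiv_f₁.self_of_nhds
    rw [h0] at h1
    rw [← heta]
    exact h1.symm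
  -- second derivative in x
  set W : ℝ × ℝ → ℝ := fun q => pdx u q + ε * α * Real.exp (α * q.1) with hWdef
  have hWdiff : DifferentiableAt ℝ W p := hpdxu_diff.add (expx_diff (ε * α) α p)
  have hWd : HasDerivAt (fun t => W (t, p.2)) (fderiv ℝ W p (1, 0)) p.1 := by
    have := (heta ▸ hWdiff.hasFDerivAt).comp_hasDerivAt p.1 (hι₁ p.1)
    exact this
  have hWval : fderiv ℝ W p (1, 0)
      = pdx (pdx u) p + ε * α * α * Real.exp (α * p.1) := by
    rw [hWdef, fderiv_fun_add hpdxu_diff (expx_diff (ε * α) α p), ContinuousLinearMap.add_apply]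
    rw [show (fderiv ℝ (fun q : ℝ × ℝ => ε * α * Real.exp (α * q.1)) p) (1,0)
      = ε * α * α * Real.exp (α * p.1) * (1:ℝ) from expx_fderiv_apply (ε * α) α p (1,0)]
    simp only [mul_one]
    rfl
  have hD₁ : HasDerivAt (deriv f₁) (fderiv ℝ W p (1, 0)) p.1 := by
    apply hWd.congr_of_eventuallyEq
    filter_upwards [hderiv_f₁, hpre₁] with t ht ht'
    rw [ht, hpdxv _ ht']
  have hA : 0 ≤ pdx (pdx u) p + ε * α * α * Real.exp (α * p.1) := by
    have := second_deriv_nonneg_of_isLocalMin hminf₁ hf₁diff hD₁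
    rwa [hWval] at this
  -- second derivative in y
  have hWd₂ : HasDerivAt (fun t => pdy u (p.1, t)) (fderiv ℝ (pdy u) p (0, 1)) p.2 := by
    have := (heta ▸ hpdyu_diff.hasFDerivAt).comp_hasDerivAt p.2 (hι₂ p.2)
    exact this
  have hD₂ : HasDerivAt (deriv f₂) (fderiv ℝ (pdy u) p (0, 1)) p.2 := by
    apply hWd₂.congr_of_eventuallyEq
    filter_upwards [hderiv_f₂, hpre₂] with t ht ht'
    rw [ht, hpdyv _ ht']
  have hB : 0 ≤ pdy (pdy u) p :=
    second_deriv_nonneg_of_isLocalMin hminf₂ hf₂diff hD₂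
  -- PDE contradiction
  have hpde := hu.pde p hp
  have hpdxu_val : pdx u p = -(ε * α * Real.exp (α * p.1)) := by
    have := hpdxv p hp
    rw [hpdxv0] at this
    linarith
  have hE : 0 < Real.exp (α * p.1) := Real.exp_pos _
  have hlap : lap u p = pdx (pdx u) p + pdy (pdy u) p := rfl
  nlinarith [mul_pos (mul_pos hε hα) hE, hA, hB, hpde, hpdxu_val, hαc, hc,
    mul_pos (mul_pos (mul_pos hε hα) hE) (sub_pos.2 hαc)]

/-- Boundary case: the minimum of `v = u + ε e^{αx}` over the truncated region cannot
occur at a free-boundary point `(ψ y₀, y₀)` with `ψ y₀ > x₁`. -/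
lemma boundary_case {c : ℝ} {ψ : ℝ → ℝ} {u : ℝ × ℝ → ℝ}
    (hc : 0 < c) (hψ : W2infPer ψ) (hu : IsTempSol c ψ u)
    {ε α : ℝ} (hε : 0 < ε) (hα : 0 < α) (y₀ : ℝ) {x₁ : ℝ} (hx₁ : x₁ < ψ y₀)
    (hmin : ∀ r ∈ OmegaCl ψ, x₁ ≤ r.1 → r.1 ≤ ψ y₀ →
      u (ψ y₀, y₀) + ε * Real.exp (α * ψ y₀) ≤ u r + ε * Real.exp (α * r.1)) : False := by
  set d : ℝ := deriv ψ y₀ with hd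
  have hψd : HasDerivAt ψ d y₀ :=
    ((hψ.contDiff.differentiable one_ne_zero) y₀).hasDerivAt
  have hmem : ((ψ y₀, y₀) : ℝ × ℝ) ∈ OmegaCl ψ := by show (ψ y₀ ≤ ψ y₀); exact le_refl _
  set D := fderivWithin ℝ u (OmegaCl ψ) (ψ y₀, y₀) with hD
  have hDF : HasFDerivWithinAt u D (OmegaCl ψ) (ψ y₀, y₀) :=
    ((hu.c1.differentiableOn one_ne_zero) _ hmem).hasFDerivWithinAt
  have hs : (0:ℝ) < Real.sqrt (1 + d ^ 2) := Real.sqrt_pos.2 (by positivity)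
  have hDc : D (1, -d) = c := by
    have h := hu.bc y₀
    rw [div_eq_div_iff (ne_of_gt hs) (ne_of_gt hs)] at h
    exact mul_right_cancel₀ (ne_of_gt hs) h
  -- the inward curve
  set γ : ℝ → ℝ × ℝ := fun t => (ψ y₀ - t, y₀ + t * d) with hγ
  have hγ0 : γ 0 = (ψ y₀, y₀) := by simp [hγ]
  have hγd : ∀ t : ℝ, HasDerivAt γ (-1, d) t := by
    intro t
    have h1 : HasDerivAt (fun t : ℝ => ψ y₀ - t) (-1) t := by
      simpa using (hasDerivAt_id t).const_sub (ψ y₀)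
    have h2 : HasDerivAt (fun t : ℝ => y₀ + t * d) d t := by
      simpa using ((hasDerivAt_id t).mul_const d).const_add y₀
    exact h1.prodMk h2
  -- the auxiliary function h
  set h : ℝ → ℝ := fun t => ψ (y₀ + t * d) + t - ψ y₀ with hhdef
  have hh0 : h 0 = 0 := by simp [hhdef]
  have hinner : HasDerivAt (fun t : ℝ => y₀ + t * d) d 0 := by
    simpa using ((hasDerivAt_id 0).mul_const d).const_add y₀
  have houter : HasDerivAt ψ d ((fun t : ℝ => y₀ + t * d) 0) := by
    simpa using hψd
  have hcomp : HasDerivAt (fun t : ℝ => ψ (y₀ + t * d)) (d * d) 0 :=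
    HasDerivAt.comp 0 houter hinner
  have hhd : HasDerivAt h (d * d + 1) 0 := by
    have := (hcomp.add (hasDerivAt_id 0)).sub_const (ψ y₀)
    simpa [hhdef] using this
  -- positivity of h on a right neighborhood
  have hslope : Tendsto (slope h 0) (nhdsWithin 0 (Ioi 0)) (nhds (d * d + 1)) :=
    (hasDerivAt_iff_tendsto_slope.1 hhd).mono_left
      (nhdsWithin_mono 0 (fun x hx => ne_of_gt hx))
  have hev1 : ∀ᶠ t in nhdsWithin 0 (Ioi 0), 0 < h t := by
    have hev := hslope.eventually (lt_mem_nhds (show (0:ℝ) < d * d + 1 by nlinarith [mul_self_nonneg d]))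
    filter_upwards [hev, self_mem_nhdsWithin] with t ht ht'
    rw [slope_def_field, hh0, sub_zero, sub_zero] at ht
    have htpos : (0:ℝ) < t := ht'
    rcases div_pos_iff.1 ht with ⟨hnum, _⟩ | ⟨_, hden⟩
    · exact hnum
    · linarith
  have hev2 : ∀ᶠ t in nhdsWithin 0 (Ioi 0), t < ψ y₀ - x₁ :=
    (gt_mem_nhds (show (0:ℝ) < ψ y₀ - x₁ by linarith)).filter_mono nhdsWithin_le_nhds
  obtain ⟨δ, hδmem, hδsub⟩ := mem_nhdsGT_iff_exists_Ioc_subset.1 (hev1.and hev2)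
  have hδpos : 0 < δ := hδmem
  -- the curve maps [0, δ] into the truncated region
  have hmap : MapsTo γ (Icc 0 δ) (OmegaCl ψ) := by
    intro t ht
    rcases eq_or_lt_of_le ht.1 with h0 | h0
    · rw [← h0]
      rw [show γ 0 = (ψ y₀, y₀) from hγ0]
      exact hmem
    · have hpos := (hδsub ⟨h0, ht.2⟩).1
      show (ψ y₀ - t : ℝ) ≤ ψ (y₀ + t * d)
      simp only [hhdef] at hpos
      linarith
  -- the composed function and its derivative
  set f : ℝ → ℝ := fun t => u (γ t) + ε * Real.exp (α * (ψ y₀ - t)) with hfdef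
  have hpart1 : HasDerivWithinAt (u ∘ γ) (D (-1, d)) (Icc 0 δ) 0 := by
    have hDF' : HasFDerivWithinAt u D (OmegaCl ψ) (γ 0) := by rw [hγ0]; exact hDF
    exact hDF'.comp_hasDerivWithinAt 0 ((hγd 0).hasDerivWithinAt) hmap
  have hpart2 : HasDerivAt (fun t : ℝ => ε * Real.exp (α * (ψ y₀ - t)))
      (ε * α * Real.exp (α * (ψ y₀ - 0)) * (-1)) 0 := by
    have hEq : (fun t : ℝ => ε * Real.exp (α * (ψ y₀ - t)))
        = fun t => (ε * Real.exp (α * ψ y₀)) * Real.exp ((-α) * t) := by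
      funext t
      rw [mul_assoc, ← Real.exp_add]
      congr 1
      ring
    have h2' := expx_hasDerivAt (ε * Real.exp (α * ψ y₀)) (-α) 0
    rw [← hEq] at h2'
    convert h2' using 1
    rw [sub_zero]
    simp [Real.exp_zero]
    ring
  have hftot : HasDerivWithinAt f (D (-1, d) + ε * α * Real.exp (α * (ψ y₀ - 0)) * (-1))
      (Icc 0 δ) 0 := by
    have := hpart1.add (hpart2.hasDerivWithinAt)
    exact this
  -- f has a minimum at 0 on [0, δ]
  have hminf : ∀ t ∈ Icc (0:ℝ) δ, f 0 ≤ f t := by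
    intro t ht
    have hγt : γ t ∈ OmegaCl ψ := hmap ht
    have hx1' : x₁ ≤ (γ t).1 := by
      rcases eq_or_lt_of_le ht.1 with h0 | h0
      · rw [← h0, hγ0]; exact le_of_lt hx₁
      · have := (hδsub ⟨h0, ht.2⟩).2
        show x₁ ≤ ψ y₀ - t
        linarith
    have hle' : (γ t).1 ≤ ψ y₀ := by
      show ψ y₀ - t ≤ ψ y₀
      linarith [ht.1]
    have := hmin (γ t) hγt hx1' hle'
    have hf0 : f 0 = u (ψ y₀, y₀) + ε * Real.exp (α * ψ y₀) := by
      rw [hfdef]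
      simp [hγ0]
    rw [hf0]
    exact this
  have hd0 : 0 ≤ D (-1, d) + ε * α * Real.exp (α * (ψ y₀ - 0)) * (-1) :=
    deriv_nonneg_of_isMinOn_Icc hδpos hftot hminf
  -- but D (-1, d) = -c
  have hDneg : D (-1, d) = -c := by
    have : ((-1 : ℝ), d) = -((1 : ℝ), -d) := by simp
    rw [this, map_neg, hDc]
  rw [hDneg] at hd0
  have : (0:ℝ) < ε * α * Real.exp (α * (ψ y₀ - 0)) := by positivity
  nlinarith

/-- **Monotonicity of the minimal temperature in the direction of propagation.**
If `c > 0`, `ψ ∈ W^{2,∞}(𝕋)` and `u` is a classical solution of the temperature problem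
for `(c,ψ)`, then `x ↦ min { u(x,y) : y ∈ 𝕋, x ≤ ψ(y) }` is nondecreasing on
`(-∞, max_𝕋 ψ]`. -/
theorem min_temperature_monotone
    (c : ℝ) (ψ : ℝ → ℝ) (u : ℝ × ℝ → ℝ)
    (hc : 0 < c) (hψ : W2infPer ψ) (hu : IsTempSol c ψ u) :
    ∀ x₁ x₂ : ℝ, x₁ ≤ x₂ → x₂ ≤ sSup (Set.range ψ) →
      sInf (u '' {p : ℝ × ℝ | p ∈ OmegaCl ψ ∧ p.1 = x₁})
        ≤ sInf (u '' {p : ℝ × ℝ | p ∈ OmegaCl ψ ∧ p.1 = x₂}) := by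
  intro x₁ x₂ h12 hx2X
  have hψc : Continuous ψ := hψ.contDiff.continuous
  have hOclosed : IsClosed (OmegaCl ψ) := isClosed_le continuous_fst (hψc.comp continuous_snd)
  have hOopen : IsOpen (Omega ψ) := isOpen_lt continuous_fst (hψc.comp continuous_snd)
  -- periodic reduction to the fundamental domain
  have hred : ∀ y : ℝ, ψ (Int.fract y) = ψ y := by
    intro y
    have h := hψ.periodic.sub_int_mul_eq (x := y) ⌊y⌋
    rw [mul_one] at h
    exact h
  have hufract : ∀ x y : ℝ, u (x, Int.fract y) = u (x, y) := by
    intro x y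
    have hp : Function.Periodic (fun z => u (x, z)) 1 := fun t => hu.periodic x t
    have h := hp.sub_int_mul_eq (x := y) ⌊y⌋
    rw [mul_one] at h
    exact h
  -- the maximum of ψ
  obtain ⟨y₀, hy₀mem, hy₀max⟩ :=
    isCompact_Icc.exists_isMaxOn (nonempty_Icc.2 zero_le_one) hψc.continuousOn
  have hub : ∀ y, ψ y ≤ ψ y₀ := by
    intro y
    rw [← hred y]
    exact isMaxOn_iff.1 hy₀max _ ⟨Int.fract_nonneg y, (Int.fract_lt_one y).le⟩
  have hbdd : BddAbove (Set.range ψ) := ⟨ψ y₀, by rintro z ⟨y, rfl⟩; exact hub y⟩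
  have hXy₀ : sSup (Set.range ψ) ≤ ψ y₀ :=
    csSup_le (Set.range_nonempty ψ) (by rintro z ⟨y, rfl⟩; exact hub y)
  have hx2y₀ : x₂ ≤ ψ y₀ := le_trans hx2X hXy₀
  have hx1y₀ : x₁ ≤ ψ y₀ := le_trans h12 hx2y₀
  set S₁ : Set (ℝ × ℝ) := {p : ℝ × ℝ | p ∈ OmegaCl ψ ∧ p.1 = x₁} with hS₁def
  set K : Set (ℝ × ℝ) := {q : ℝ × ℝ | q ∈ OmegaCl ψ ∧ x₁ ≤ q.1 ∧ q.1 ≤ ψ y₀} with hKdef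
  set K₀ : Set (ℝ × ℝ) := K ∩ {q : ℝ × ℝ | q.2 ∈ Icc (0:ℝ) 1} with hK₀def
  have hK₀eq : K₀ = OmegaCl ψ ∩ (Icc x₁ (ψ y₀) ×ˢ Icc (0:ℝ) 1) := by
    ext q
    constructor
    · rintro ⟨⟨hO, h1, h2⟩, h3⟩; exact ⟨hO, ⟨⟨h1, h2⟩, h3⟩⟩
    · rintro ⟨hO, ⟨⟨h1, h2⟩, h3⟩⟩; exact ⟨⟨hO, h1, h2⟩, h3⟩
  have hK₀c : IsCompact K₀ := by
    rw [hK₀eq]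
    exact (isCompact_Icc.prod isCompact_Icc).inter_left hOclosed
  have hK₀sub : K₀ ⊆ OmegaCl ψ := fun q hq => hq.1.1
  have hK₀ne : K₀.Nonempty :=
    ⟨(x₁, y₀), ⟨⟨show x₁ ≤ ψ y₀ from hx1y₀, le_refl x₁, hx1y₀⟩, hy₀mem⟩⟩
  -- the infimum over the slice x = x₁ is a true lower bound
  have hsub : u '' S₁ ⊆ u '' K₀ := by
    rintro z ⟨q, ⟨hqO, hqx⟩, rfl⟩
    refine ⟨(q.1, Int.fract q.2), ⟨⟨?_, ?_, ?_⟩, ?_⟩, ?_⟩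
    · show q.1 ≤ ψ (Int.fract q.2)
      rw [hred]; exact hqO
    · exact hqx.ge
    · rw [hqx]; exact hx1y₀
    · exact ⟨Int.fract_nonneg _, (Int.fract_lt_one _).le⟩
    · rw [hufract]
  have hbb : BddBelow (u '' S₁) :=
    ((hK₀c.image_of_continuousOn (hu.contOn.mono hK₀sub)).bddBelow).mono hsub
  -- KEY INEQUALITY: minimum principle with the exponential barrier
  have key : ∀ ε > 0, ∀ q ∈ K, sInf (u '' S₁) ≤ u q + ε * Real.exp ((c/2) * q.1) := by
    intro ε hε q hq
    set α : ℝ := c / 2 with hαdef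
    have hα : 0 < α := half_pos hc
    have hαc : α < c := by rw [hαdef]; linarith
    set v : ℝ × ℝ → ℝ := fun r => u r + ε * Real.exp (α * r.1) with hv
    have hvcont : ContinuousOn v K₀ := by
      apply ContinuousOn.add (hu.contOn.mono hK₀sub)
      exact Continuous.continuousOn (by continuity)
    obtain ⟨p, hpK₀, hpmin'⟩ := hK₀c.exists_isMinOn hK₀ne hvcont
    have hpmin : ∀ r ∈ K, v p ≤ v r := by
      intro r hr
      have hr' : (r.1, Int.fract r.2) ∈ K₀ :=
        ⟨⟨show r.1 ≤ ψ (Int.fract r.2) by rw [hred]; exact hr.1, hr.2.1, hr.2.2⟩,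
          ⟨Int.fract_nonneg _, (Int.fract_lt_one _).le⟩⟩
      have heq : v (r.1, Int.fract r.2) = v r := by
        show u (r.1, Int.fract r.2) + ε * Real.exp (α * r.1)
          = u r + ε * Real.exp (α * r.1)
        rw [hufract]
      calc v p ≤ v (r.1, Int.fract r.2) := isMinOn_iff.1 hpmin' _ hr'
        _ = v r := heq
    have hpK : p ∈ K := hpK₀.1
    rcases eq_or_lt_of_le hpK.2.1 with hx | hx
    · -- the minimum is on the slice x = x₁
      have hpS₁ : p ∈ S₁ := ⟨hpK.1, hx.symm⟩
      have h1 : sInf (u '' S₁) ≤ u p := csInf_le hbb ⟨p, hpS₁, rfl⟩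
      have h3 : u p ≤ v p := le_add_of_nonneg_right (by positivity)
      have h2 : v p ≤ v q := hpmin q hq
      show sInf (u '' S₁) ≤ v q
      exact le_trans (le_trans h1 h3) h2
    · exfalso
      have hple : p.1 ≤ ψ p.2 := hpK.1
      rcases lt_or_eq_of_le hple with hint | hbd
      · -- interior minimum: impossible
        refine interior_case hc hψc hu hε hα hαc hint ?_
        have hWopen : IsOpen (Omega ψ ∩ {r : ℝ × ℝ | x₁ < r.1}) :=
          hOopen.inter (isOpen_lt continuous_const continuous_fst)
        have hploc : p ∈ Omega ψ ∩ {r : ℝ × ℝ | x₁ < r.1} := ⟨hint, hx⟩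
        have : ∀ᶠ r in nhds p, v p ≤ v r := by
          filter_upwards [hWopen.mem_nhds hploc] with r hr
          have hrin : r.1 < ψ r.2 := hr.1
          exact hpmin r ⟨le_of_lt hrin, le_of_lt hr.2, le_trans (le_of_lt hrin) (hub r.2)⟩
        exact this
      · -- free-boundary minimum: impossible
        have hx₁lt : x₁ < ψ p.2 := by rw [← hbd]; exact hx
        refine boundary_case hc hψ hu hε hα p.2 hx₁lt ?_
        intro r hrO hr1 hr2
        have hrK : r ∈ K := ⟨hrO, hr1, le_trans hr2 (hub p.2)⟩
        have h := hpmin r hrK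
        show u (ψ p.2, p.2) + ε * Real.exp (α * ψ p.2) ≤ u r + ε * Real.exp (α * r.1)
        rw [← hbd, Prod.mk.eta]
        exact h
  -- pass to the limit ε → 0
  have key2 : ∀ q ∈ K, sInf (u '' S₁) ≤ u q := by
    intro q hq
    by_contra hlt
    push_neg at hlt
    have hEpos : 0 < Real.exp ((c/2) * q.1) := Real.exp_pos _
    set ε := (sInf (u '' S₁) - u q) / (2 * Real.exp ((c/2) * q.1)) with hεdef
    have hεpos : 0 < ε := div_pos (by linarith) (by positivity)
    have hkey := key ε hεpos q hq
    have heq : ε * Real.exp ((c/2) * q.1) = (sInf (u '' S₁) - u q) / 2 := by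
      rw [hεdef]
      field_simp
    rw [heq] at hkey
    linarith
  -- conclude
  apply le_csInf
  · exact ⟨u (x₂, y₀), ⟨(x₂, y₀), ⟨show x₂ ≤ ψ y₀ from hx2y₀, rfl⟩, rfl⟩⟩
  · rintro b ⟨q, ⟨hqO, hqx⟩, rfl⟩
    exact key2 q ⟨hqO, by rw [hqx]; exact h12, by rw [hqx]; exact hx2y₀⟩
end
end

section
/- Let c > 0, let ψ ∈ W^{2,∞}(𝕋) with ψ(y) ≥ 0 for all y, and let u be a bounded classical solution of the temperature problem for (c,ψ). Then 0 ≤ u(x,y) ≤ e^{c·x} for all (x,y) in the closure of Ω_ψ. -/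
open MeasureTheory Set Filter
open scoped NNReal

noncomputable section

open scoped Topology

lemma hasFDerivAt_expx (l : ℝ) (p : ℝ × ℝ) :
    HasFDerivAt (fun q : ℝ × ℝ => Real.exp (l * q.1))
      ((l * Real.exp (l * p.1)) • ContinuousLinearMap.fst ℝ ℝ ℝ) p := by
  have h1 : HasFDerivAt (fun q : ℝ × ℝ => l * q.1)
      (l • ContinuousLinearMap.fst ℝ ℝ ℝ) p := (hasFDerivAt_fst).const_mul l
  have h2 := (Real.hasDerivAt_exp (l * p.1)).comp_hasFDerivAt p h1
  have h3 : Real.exp (l * p.1) • l • ContinuousLinearMap.fst ℝ ℝ ℝ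
      = (l * Real.exp (l * p.1)) • ContinuousLinearMap.fst ℝ ℝ ℝ := by
    rw [smul_smul, mul_comm]
  rw [h3] at h2
  exact h2

lemma second_deriv_test {f f' : ℝ → ℝ} {s : ℝ}
    (hf : ∀ᶠ t in 𝓝 (0:ℝ), HasDerivAt f (f' t) t)
    (hs : HasDerivAt f' s 0)
    (hmin : IsLocalMin f 0) : 0 ≤ s := by
  by_contra hneg
  push_neg at hneg
  have hf0 : f' 0 = 0 := by
    have h2 : HasDerivAt f (f' 0) 0 := hf.self_of_nhds
    rw [← h2.deriv]
    exact hmin.deriv_eq_zero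
  have hslope : Tendsto (fun t => f' t / t) (𝓝[>] (0:ℝ)) (𝓝 s) := by
    have h1 := hasDerivAt_iff_tendsto_slope.1 hs
    have h2 : slope f' 0 = fun t => f' t / t := by
      funext t
      rw [slope_def_field]
      rw [hf0, sub_zero, sub_zero]
    rw [h2] at h1
    exact h1.mono_left (nhdsWithin_mono 0 (fun t ht => by simpa using ne_of_gt ht))
  have hev : ∀ᶠ t in 𝓝[>] (0:ℝ), f' t < 0 := by
    filter_upwards [hslope.eventually_lt_const hneg, self_mem_nhdsWithin] with t ht ht0
    have ht0' : (0:ℝ) < t := ht0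
    by_contra h
    push_neg at h
    exact absurd (div_nonneg h ht0'.le) (not_le.2 ht)
  obtain ⟨δ₀, hδ₀, hδ₀sub⟩ := mem_nhdsGT_iff_exists_Ioc_subset.1 hev
  obtain ⟨r, hr, hball⟩ := Metric.eventually_nhds_iff.1 hf
  set δ := min δ₀ (r/2) with hδdef
  have hδ : 0 < δ := lt_min hδ₀ (by linarith)
  have hcontf : ContinuousOn f (Icc 0 δ) := by
    intro t ht
    have : dist t (0:ℝ) < r := by
      rw [Real.dist_eq, sub_zero, abs_of_nonneg ht.1]
      exact lt_of_le_of_lt (le_trans ht.2 (min_le_right _ _)) (by linarith)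
    exact ((hball this).differentiableAt.continuousAt).continuousWithinAt
  have hanti : StrictAntiOn f (Icc 0 δ) := by
    apply strictAntiOn_of_deriv_neg (convex_Icc _ _) hcontf
    intro t ht
    rw [interior_Icc] at ht
    have hdist : dist t (0:ℝ) < r := by
      rw [Real.dist_eq, sub_zero, abs_of_nonneg ht.1.le]
      exact lt_of_lt_of_le (lt_of_lt_of_le ht.2 (min_le_right _ _)) (by linarith)
    rw [(hball hdist).deriv]
    exact hδ₀sub ⟨ht.1, le_trans ht.2.le (min_le_left _ _)⟩
  obtain ⟨r', hr', hloc⟩ := Metric.eventually_nhds_iff.1 hmin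
  set t := min δ (r'/2) with htdef
  have ht0 : 0 < t := lt_min hδ (by linarith)
  have h1 : f t < f 0 := hanti ⟨le_refl 0, hδ.le⟩ ⟨ht0.le, min_le_left _ _⟩ ht0
  have h2 : f 0 ≤ f t := hloc (by
    rw [Real.dist_eq, sub_zero, abs_of_nonneg ht0.le]
    exact lt_of_le_of_lt (min_le_right _ _) (by linarith))
  linarith

lemma no_min_of_neg_deriv {φ : ℝ → ℝ} {d δ : ℝ} (hδ : 0 < δ)
    (hd : d < 0) (hφ : HasDerivWithinAt φ d (Icc 0 δ) 0)
    (hge : ∀ t ∈ Ioc 0 δ, φ 0 ≤ φ t) : False := by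
  have h1 : Tendsto (slope φ 0) (𝓝[Icc 0 δ \ {0}] 0) (𝓝 d) :=
    hasDerivWithinAt_iff_tendsto_slope.1 hφ
  have hsub : Icc 0 δ \ {0} = Ioc 0 δ := by
    ext t
    simp only [mem_diff, mem_Icc, mem_singleton_iff, mem_Ioc]
    constructor
    · rintro ⟨⟨h1', h2'⟩, h3'⟩
      exact ⟨lt_of_le_of_ne h1' (Ne.symm h3'), h2'⟩
    · rintro ⟨h1', h2'⟩
      exact ⟨⟨h1'.le, h2'⟩, ne_of_gt h1'⟩
  rw [hsub] at h1
  have h2 : 𝓝[>] (0:ℝ) ≤ 𝓝[Ioc 0 δ] 0 := nhdsWithin_le_of_mem (Ioc_mem_nhdsGT hδ)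
  have h3 := (h1.mono_left h2).eventually_lt_const hd
  have h4 : Ioc (0:ℝ) δ ∈ 𝓝[>] (0:ℝ) := Ioc_mem_nhdsGT hδ
  obtain ⟨t, hts, htm⟩ := (h3.and (eventually_of_mem h4 (fun t ht => ht))).exists
  have ht0 : 0 < t := htm.1
  rw [slope_def_field, sub_zero] at hts
  have hlt : φ t - φ 0 < 0 := by
    by_contra h
    push_neg at h
    exact absurd (div_nonneg h ht0.le) (not_le.2 hts)
  have := hge t htm
  linarith

lemma comb_pdx_lap (w : ℝ × ℝ → ℝ) (U : Set (ℝ × ℝ)) (hU : IsOpen U)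
    (hw : ContDiffOn ℝ 2 w U) (a s l : ℝ) {p : ℝ × ℝ} (hp : p ∈ U) :
    pdx (fun q => a * w q + s * Real.exp (l * q.1)) p
        = a * pdx w p + s * (l * Real.exp (l * p.1)) ∧
    lap (fun q => a * w q + s * Real.exp (l * q.1)) p
        = a * lap w p + s * (l ^ 2 * Real.exp (l * p.1)) := by
  set F : ℝ × ℝ → ℝ := fun q => a * w q + s * Real.exp (l * q.1) with hF
  have hwd : DifferentiableOn ℝ w U := hw.differentiableOn two_ne_zero
  have key : ∀ r ∈ U, HasFDerivAt F
      (a • fderiv ℝ w r + s • ((l * Real.exp (l * r.1)) • ContinuousLinearMap.fst ℝ ℝ ℝ)) r := by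
    intro r hr
    exact (((hwd.differentiableAt (hU.mem_nhds hr)).hasFDerivAt).const_mul a).add
      ((hasFDerivAt_expx l r).const_mul s)
  have hpdxF : ∀ r ∈ U, pdx F r = a * pdx w r + s * (l * Real.exp (l * r.1)) := by
    intro r hr
    show fderiv ℝ F r (1, 0) = _
    rw [(key r hr).fderiv]
    simp [pdx]
  have hpdyF : ∀ r ∈ U, pdy F r = a * pdy w r := by
    intro r hr
    show fderiv ℝ F r (0, 1) = _
    rw [(key r hr).fderiv]
    simp [pdy]
  have hw1 : ContDiffOn ℝ 1 (fderiv ℝ w) U := hw.fderiv_of_isOpen hU (by norm_num)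
  have hwd2 : DifferentiableAt ℝ (fderiv ℝ w) p :=
    (hw1.differentiableOn one_ne_zero).differentiableAt (hU.mem_nhds hp)
  have hpdxw : DifferentiableAt ℝ (pdx w) p :=
    hwd2.clm_apply (differentiableAt_const _)
  have hpdyw : DifferentiableAt ℝ (pdy w) p :=
    hwd2.clm_apply (differentiableAt_const _)
  -- second derivative, x direction
  have hxev : pdx F =ᶠ[𝓝 p] fun r => a * pdx w r + (s * l) * Real.exp (l * r.1) := by
    filter_upwards [hU.mem_nhds hp] with r hr
    rw [hpdxF r hr]; ring
  have hyev : pdy F =ᶠ[𝓝 p] fun r => a * pdy w r := by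
    filter_upwards [hU.mem_nhds hp] with r hr
    exact hpdyF r hr
  have hx2 : HasFDerivAt (fun r => a * pdx w r + (s * l) * Real.exp (l * r.1))
      (a • fderiv ℝ (pdx w) p + (s * l) • ((l * Real.exp (l * p.1)) • ContinuousLinearMap.fst ℝ ℝ ℝ)) p :=
    ((hpdxw.hasFDerivAt).const_mul a).add ((hasFDerivAt_expx l p).const_mul (s * l))
  have hy2 : HasFDerivAt (fun r => a * pdy w r) (a • fderiv ℝ (pdy w) p) p :=
    (hpdyw.hasFDerivAt).const_mul a
  have hxx : pdx (pdx F) p = a * pdx (pdx w) p + s * (l ^ 2 * Real.exp (l * p.1)) := by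
    show fderiv ℝ (pdx F) p (1, 0) = _
    rw [hxev.fderiv_eq, hx2.fderiv]
    simp [pdx]
    ring
  have hyy : pdy (pdy F) p = a * pdy (pdy w) p := by
    show fderiv ℝ (pdy F) p (0, 1) = _
    rw [hyev.fderiv_eq, hy2.fderiv]
    simp [pdy]
  refine ⟨hpdxF p hp, ?_⟩
  show pdx (pdx F) p + pdy (pdy F) p = _
  rw [hxx, hyy]
  show _ = a * (pdx (pdx w) p + pdy (pdy w) p) + _
  ring

lemma isOpen_Omega {ψ : ℝ → ℝ} (hψ : Continuous ψ) : IsOpen (Omega ψ) :=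
  isOpen_lt continuous_fst (hψ.comp continuous_snd)

lemma isClosed_OmegaCl {ψ : ℝ → ℝ} (hψ : Continuous ψ) : IsClosed (OmegaCl ψ) :=
  isClosed_le continuous_fst (hψ.comp continuous_snd)

lemma dir_second_deriv_nonneg {g : ℝ × ℝ → ℝ} {U : Set (ℝ × ℝ)} (hU : IsOpen U)
    {q : ℝ × ℝ} (hq : q ∈ U)
    (hgd : DifferentiableOn ℝ g U)
    (hgd2 : DifferentiableAt ℝ (fun r => fderiv ℝ g r) q)
    (hlocmin : IsLocalMin g q) (v : ℝ × ℝ) :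
    0 ≤ fderiv ℝ (fun r => fderiv ℝ g r v) q v := by
  set A : ℝ → ℝ × ℝ := fun t => (q.1 + t * v.1, q.2 + t * v.2) with hA_def
  have hA : ∀ t : ℝ, HasDerivAt A v t := by
    intro t
    have h1 : HasDerivAt (fun t : ℝ => q.1 + t * v.1) v.1 t := by
      simpa using ((hasDerivAt_id t).mul_const v.1).const_add q.1
    have h2 : HasDerivAt (fun t : ℝ => q.2 + t * v.2) v.2 t := by
      simpa using ((hasDerivAt_id t).mul_const v.2).const_add q.2
    exact h1.prodMk h2
  have hA0 : A 0 = q := by simp [hA_def]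
  have hAc : Continuous A := by fun_prop
  have hAtend : Tendsto A (𝓝 0) (𝓝 q) := by
    rw [← hA0]
    exact hAc.continuousAt
  have hf : ∀ᶠ t in 𝓝 (0:ℝ), HasDerivAt (fun t => g (A t)) (fderiv ℝ g (A t) v) t := by
    have hpre : A ⁻¹' U ∈ 𝓝 (0:ℝ) := hAtend (hU.mem_nhds hq)
    filter_upwards [hpre] with t ht
    exact ((hgd.differentiableAt (hU.mem_nhds ht)).hasFDerivAt).comp_hasDerivAt t (hA t)
  have hd : DifferentiableAt ℝ (fun r => fderiv ℝ g r v) q :=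
    hgd2.clm_apply (differentiableAt_const v)
  have hd' : DifferentiableAt ℝ (fun r => fderiv ℝ g r v) (A 0) := by rw [hA0]; exact hd
  have hs : HasDerivAt (fun t => fderiv ℝ g (A t) v)
      (fderiv ℝ (fun r => fderiv ℝ g r v) q v) 0 := by
    have h := (hd'.hasFDerivAt).comp_hasDerivAt 0 (hA 0)
    rw [hA0] at h
    exact h
  have hminf : IsLocalMin (fun t => g (A t)) 0 := by
    have h := hAtend.eventually hlocmin
    show ∀ᶠ t in 𝓝 (0:ℝ), _ ≤ _
    filter_upwards [h] with t ht
    simpa [hA0] using ht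
  exact second_deriv_test hf hs hminf

lemma temp_nonneg (c : ℝ) (ψ : ℝ → ℝ) (w : ℝ × ℝ → ℝ) (hc : 0 < c)
    (hψper : Function.Periodic ψ 1) (hψc : ContDiff ℝ 1 ψ) (hψ0 : ∀ y, 0 ≤ ψ y)
    (hper : ∀ x y : ℝ, w (x, y + 1) = w (x, y))
    (hcont : ContinuousOn w (OmegaCl ψ))
    (hC2 : ContDiffOn ℝ 2 w (Omega ψ))
    (hpde : ∀ p ∈ Omega ψ, c * pdx w p - lap w p = 0)
    (hbc : ∀ y : ℝ, ∃ L : (ℝ × ℝ) →L[ℝ] ℝ, HasFDerivWithinAt w L (OmegaCl ψ) (ψ y, y)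
        ∧ 0 ≤ L (1, -deriv ψ y))
    (hdecay : ∀ ε > 0, ∃ X : ℝ, ∀ p ∈ OmegaCl ψ, p.1 ≤ X → -ε ≤ w p) :
    ∀ p ∈ OmegaCl ψ, 0 ≤ w p := by
  have hψcont : Continuous ψ := hψc.continuous
  by_contra hcon
  push_neg at hcon
  obtain ⟨p₀, hp₀, hw0⟩ := hcon
  set l : ℝ := c / 2 with hl
  have hl0 : 0 < l := by positivity
  have hlc : l < c := by rw [hl]; linarith
  have hEpos : ∀ x : ℝ, 0 < Real.exp (l * x) := fun x => Real.exp_pos _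
  set ε : ℝ := -w p₀ / (2 * Real.exp (l * p₀.1)) with hε_def
  have hε : 0 < ε := by
    apply div_pos (by linarith) (by positivity)
  set g : ℝ × ℝ → ℝ := fun q => w q + ε * Real.exp (l * q.1) with hg
  have hgp₀ : g p₀ = w p₀ / 2 := by
    show w p₀ + ε * Real.exp (l * p₀.1) = w p₀ / 2
    rw [hε_def]
    field_simp
    ring
  obtain ⟨X₀, hX₀⟩ := hdecay (-w p₀ / 4) (by linarith)
  set X : ℝ := min X₀ (min p₀.1 0) - 1 with hX_def
  have hXX₀ : X < X₀ := by
    have h1 := min_le_left X₀ (min p₀.1 0); linarith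
  have hXp₀ : X < p₀.1 := by
    have h1 := min_le_right X₀ (min p₀.1 0)
    have h2 := min_le_left p₀.1 (0:ℝ)
    linarith
  have hX0 : X < 0 := by
    have h1 := min_le_right X₀ (min p₀.1 0)
    have h2 := min_le_right p₀.1 (0:ℝ)
    linarith
  -- periodicity in integer form
  have hwper : ∀ (x y : ℝ) (n : ℤ), w (x, y - n) = w (x, y) := by
    intro x y n
    have hP : Function.Periodic (fun z => w (x, z)) 1 := fun t => hper x t
    simpa using hP.sub_int_mul_eq n
  have hψint : ∀ (y : ℝ) (n : ℤ), ψ (y - n) = ψ y := by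
    intro y n
    simpa using hψper.sub_int_mul_eq n
  have hgper : ∀ (p : ℝ × ℝ) (n : ℤ), g (p.1, p.2 - n) = g p := by
    intro p n
    show w (p.1, p.2 - n) + _ = w (p.1, p.2) + _
    rw [hwper]
  -- the compact set K
  set K : Set (ℝ × ℝ) := {p | p ∈ OmegaCl ψ ∧ X ≤ p.1 ∧ p.2 ∈ Icc (0:ℝ) 1} with hK_def
  obtain ⟨y₀, -, hy₀⟩ := isCompact_Icc.exists_isMaxOn (α := ℝ) (β := ℝ)
    (nonempty_Icc.2 zero_le_one) (hψcont.continuousOn)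
  set B := ψ y₀ with hB
  have hKsub : K ⊆ Icc ((X, 0) : ℝ × ℝ) ((B, 1) : ℝ × ℝ) := by
    rintro p ⟨hp1, hp2, hp3⟩
    refine ⟨⟨hp2, hp3.1⟩, ⟨le_trans hp1 (hy₀ hp3), hp3.2⟩⟩
  have hKclosed : IsClosed K := by
    have h1 : IsClosed (OmegaCl ψ) := isClosed_OmegaCl hψcont
    have h2 : IsClosed {p : ℝ × ℝ | X ≤ p.1} := isClosed_le continuous_const continuous_fst
    have h3 : IsClosed {p : ℝ × ℝ | p.2 ∈ Icc (0:ℝ) 1} := isClosed_Icc.preimage continuous_snd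
    exact h1.inter (h2.inter h3)
  have hK : IsCompact K := isCompact_Icc.of_isClosed_subset hKclosed hKsub
  -- K is nonempty : shift p₀
  set q₀ : ℝ × ℝ := (p₀.1, p₀.2 - ⌊p₀.2⌋) with hq₀_def
  have hq₀K : q₀ ∈ K := by
    refine ⟨?_, hXp₀.le, ?_⟩
    · show q₀.1 ≤ ψ q₀.2
      show p₀.1 ≤ ψ (p₀.2 - ⌊p₀.2⌋)
      rw [hψint]
      exact hp₀
    · constructor
      · exact sub_nonneg.2 (Int.floor_le _)
      · exact (Int.fract_lt_one p₀.2).le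
  have hgq₀ : g q₀ = g p₀ := hgper p₀ ⌊p₀.2⌋
  have hgcont : ContinuousOn g K := by
    apply ContinuousOn.add (hcont.mono (fun p hp => hp.1))
    exact (Continuous.continuousOn (by fun_prop))
  obtain ⟨q, hqK, hqmin⟩ := hK.exists_isMinOn ⟨q₀, hq₀K⟩ hgcont
  -- min over the whole region x ≥ X
  have hmin : ∀ p ∈ OmegaCl ψ, X ≤ p.1 → g q ≤ g p := by
    intro p hp hXp
    have hmem : (p.1, p.2 - ⌊p.2⌋) ∈ K := by
      refine ⟨?_, hXp, ?_⟩
      · show p.1 ≤ ψ (p.2 - ⌊p.2⌋)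
        rw [hψint]
        exact hp
      · exact ⟨sub_nonneg.2 (Int.floor_le _), (Int.fract_lt_one p.2).le⟩
    calc g q ≤ g (p.1, p.2 - ⌊p.2⌋) := hqmin hmem
    _ = g p := hgper p ⌊p.2⌋
  have hqm₀ : g q ≤ w p₀ / 2 := by
    rw [← hgp₀, ← hgq₀]
    exact hqmin hq₀K
    -- case analysis on the minimizer q
  rcases eq_or_lt_of_le (show q.1 ≤ ψ q.2 from hqK.1) with hb | hint
  · -- boundary case
    set y := q.2 with hy_def
    have hq_eq : q = (ψ y, y) := by
      rw [Prod.ext_iff]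
      exact ⟨hb, rfl⟩
    obtain ⟨L, hL, hL0⟩ := hbc y
    set a := deriv ψ y with ha_def
    set e := Real.exp (l * ψ y) with he_def
    have hgL : HasFDerivWithinAt g (L + ε • ((l * e) • ContinuousLinearMap.fst ℝ ℝ ℝ))
        (OmegaCl ψ) (ψ y, y) :=
      hL.add (((hasFDerivAt_expx l (ψ y, y)).hasFDerivWithinAt).const_mul ε)
    set d : ℝ := (L + ε • ((l * e) • ContinuousLinearMap.fst ℝ ℝ ℝ)) (-1, a) with hd_def
    have hd_eq : d = -(L (1, -a)) - ε * (l * e) := by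
      have h1 : ((-1 : ℝ), a) = -((1 : ℝ), -a) := by simp [Prod.ext_iff]
      have hM : (ε • (l * e) • ContinuousLinearMap.fst ℝ ℝ ℝ) ((-1 : ℝ), a)
          = ε * ((l * e) * (-1)) := by simp
      rw [hd_def, ContinuousLinearMap.add_apply, hM, h1, map_neg]
      ring
    have hepos : 0 < e := Real.exp_pos _
    have hd_neg : d < 0 := by
      rw [hd_eq]
      have h2 : 0 < ε * (l * e) := by positivity
      linarith
    set γ : ℝ → ℝ × ℝ := fun t => (ψ y - t, y + t * a) with hγ_def
    have hγ0 : γ 0 = (ψ y, y) := by simp [hγ_def]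
    have hγd : HasDerivAt γ (-1, a) 0 := by
      have h1 : HasDerivAt (fun t : ℝ => ψ y - t) (-1) 0 := by
        simpa using (hasDerivAt_id (0:ℝ)).const_sub (ψ y)
      have h2 : HasDerivAt (fun t : ℝ => y + t * a) a 0 := by
        simpa using ((hasDerivAt_id (0:ℝ)).mul_const a).const_add y
      exact h1.prodMk h2
    have hψd : ∀ z : ℝ, HasDerivAt ψ (deriv ψ z) z :=
      fun z => (hψc.differentiable one_ne_zero z).hasDerivAt
    have hh : HasDerivAt (fun t : ℝ => ψ (y + t * a) - (ψ y - t)) (a * a + 1) 0 := by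
      have h2 : HasDerivAt (fun t : ℝ => y + t * a) a 0 := by
        simpa using ((hasDerivAt_id (0:ℝ)).mul_const a).const_add y
      have h1 : HasDerivAt (fun t : ℝ => ψ (y + t * a)) (a * a) 0 := by
        have h3 := (hψd (y + 0 * a)).comp 0 h2
        simpa [mul_comm, ha_def, Function.comp_def] using h3
      have h3 : HasDerivAt (fun t : ℝ => ψ y - t) (-1) 0 := by
        simpa using (hasDerivAt_id (0:ℝ)).const_sub (ψ y)
      exact (h1.sub h3).congr_deriv (by ring)
    have hhev : ∀ᶠ t in 𝓝[>] (0:ℝ), 0 < ψ (y + t * a) - (ψ y - t) := by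
      have hh0 : ψ (y + 0 * a) - (ψ y - 0) = 0 := by simp
      have hslope : Tendsto (fun t => (ψ (y + t * a) - (ψ y - t)) / t) (𝓝[>] (0:ℝ))
          (𝓝 (a * a + 1)) := by
        have h1 := hasDerivAt_iff_tendsto_slope.1 hh
        have h2 : slope (fun t : ℝ => ψ (y + t * a) - (ψ y - t)) 0
            = fun t => (ψ (y + t * a) - (ψ y - t)) / t := by
          funext t
          rw [slope_def_field]
          rw [hh0, sub_zero, sub_zero]
        rw [h2] at h1
        exact h1.mono_left (nhdsWithin_mono 0 (fun t ht => by simpa using ne_of_gt ht))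
      filter_upwards [hslope.eventually_const_lt (by nlinarith : (0:ℝ) < a * a + 1),
        self_mem_nhdsWithin] with t h1 h2
      have h2' : (0:ℝ) < t := h2
      rcases div_pos_iff.1 h1 with ⟨hnum, -⟩ | ⟨-, hden⟩
      · exact hnum
      · linarith
    obtain ⟨δ₁, hδ₁, hδ₁sub⟩ := mem_nhdsGT_iff_exists_Ioc_subset.1 hhev
    set δ := min δ₁ (-X) with hδ_def
    have hδ : 0 < δ := lt_min hδ₁ (by linarith)
    have hmaps : MapsTo γ (Icc 0 δ) (OmegaCl ψ) := by
      intro t ht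
      rcases eq_or_lt_of_le ht.1 with h0 | h0
      · show (γ t).1 ≤ ψ ((γ t).2)
        rw [← h0]
        simp [hγ_def]
      · have htδ₁ : t ∈ Ioc 0 δ₁ := ⟨h0, le_trans ht.2 (min_le_left _ _)⟩
        have h3 : 0 < ψ (y + t * a) - (ψ y - t) := hδ₁sub htδ₁
        show (γ t).1 ≤ ψ ((γ t).2)
        show ψ y - t ≤ ψ (y + t * a)
        linarith
    have hφd : HasDerivWithinAt (fun t => g (γ t)) d (Icc 0 δ) 0 := by
      have hgL' : HasFDerivWithinAt g (L + ε • ((l * e) • ContinuousLinearMap.fst ℝ ℝ ℝ))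
          (OmegaCl ψ) (γ 0) := by rw [hγ0]; exact hgL
      exact hgL'.comp_hasDerivWithinAt 0 (hγd.hasDerivWithinAt) hmaps
    apply no_min_of_neg_deriv hδ hd_neg hφd
    intro t ht
    have hγt : γ t ∈ OmegaCl ψ := hmaps ⟨ht.1.le, ht.2⟩
    have hγtX : X ≤ (γ t).1 := by
      show X ≤ ψ y - t
      have h1 : t ≤ -X := le_trans ht.2 (min_le_right _ _)
      have h2 : 0 ≤ ψ y := hψ0 y
      linarith
    have h4 := hmin (γ t) hγt hγtX
    calc (fun t => g (γ t)) 0 = g q := by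
          show g (γ 0) = g q
          rw [hγ0, hq_eq]
    _ ≤ g (γ t) := h4
  · by_cases hX' : q.1 ≤ X₀
    · -- decay region
      have h1 := hX₀ q hqK.1 hX'
      have h2 : 0 < ε * Real.exp (l * q.1) := by positivity
      have h3 : g q = w q + ε * Real.exp (l * q.1) := rfl
      linarith
    · -- interior case
      push_neg at hX'
      have hqΩ : q ∈ Omega ψ := hint
      have hXq : X < q.1 := hXX₀.trans hX'
      have hΩ : IsOpen (Omega ψ) := isOpen_Omega hψcont
      have hVopen : IsOpen (Omega ψ ∩ {p : ℝ × ℝ | X < p.1}) :=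
        hΩ.inter (isOpen_lt continuous_const continuous_fst)
      have hlocmin : IsLocalMin g q := by
        apply Filter.eventually_of_mem (hVopen.mem_nhds ⟨hqΩ, hXq⟩)
        intro p hp
        exact hmin p (le_of_lt (show p.1 < ψ p.2 from hp.1)) (le_of_lt hp.2)
      have hC2E : ContDiff ℝ 2 (fun q : ℝ × ℝ => ε * Real.exp (l * q.1)) := by fun_prop
      have hC2g : ContDiffOn ℝ 2 g (Omega ψ) := hC2.add hC2E.contDiffOn
      have hgdiff : DifferentiableOn ℝ g (Omega ψ) := hC2g.differentiableOn two_ne_zero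
      have hg1 : ContDiffOn ℝ 1 (fderiv ℝ g) (Omega ψ) := hC2g.fderiv_of_isOpen hΩ (by norm_num)
      have hgd2 : DifferentiableAt ℝ (fun r => fderiv ℝ g r) q :=
        (hg1.differentiableOn one_ne_zero).differentiableAt (hΩ.mem_nhds hqΩ)
      have hfd0 : fderiv ℝ g q = 0 := hlocmin.fderiv_eq_zero
      have hpdx0 : pdx g q = 0 := by
        show fderiv ℝ g q (1, 0) = 0
        rw [hfd0]
        rfl
      have hBx : 0 ≤ pdx (pdx g) q :=
        dir_second_deriv_nonneg hΩ hqΩ hgdiff hgd2 hlocmin (1, 0)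
      have hBy : 0 ≤ pdy (pdy g) q :=
        dir_second_deriv_nonneg hΩ hqΩ hgdiff hgd2 hlocmin (0, 1)
      have hlap_ge : 0 ≤ lap g q := add_nonneg hBx hBy
      have hgc : g = fun r => 1 * w r + ε * Real.exp (l * r.1) := by
        funext r
        show w r + _ = _
        ring
      have hcomb := comb_pdx_lap w (Omega ψ) hΩ hC2 1 ε l hqΩ
      have hpdxg : pdx g q = 1 * pdx w q + ε * (l * Real.exp (l * q.1)) := by
        rw [hgc]; exact hcomb.1
      have hlapg : lap g q = 1 * lap w q + ε * (l ^ 2 * Real.exp (l * q.1)) := by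
        rw [hgc]; exact hcomb.2
      have hpdeq := hpde q hqΩ
      have hkey : c * pdx g q - lap g q = ε * (l * (c - l)) * Real.exp (l * q.1) := by
        rw [hpdxg, hlapg]
        linear_combination hpdeq
      have hpos : 0 < ε * (l * (c - l)) * Real.exp (l * q.1) := by
        have : 0 < c - l := by linarith
        positivity
      rw [hpdx0] at hkey
      linarith

/-- If `c > 0`, `ψ ∈ W^{2,∞}(𝕋)` with `ψ ≥ 0`, and `u` is a bounded classical solution
of the temperature problem for `(c,ψ)`, then `0 ≤ u(x,y) ≤ e^{cx}` on the closure of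
`Ω_ψ`. -/
theorem temperature_exponential_bound
    (c : ℝ) (ψ : ℝ → ℝ) (u : ℝ × ℝ → ℝ)
    (hc : 0 < c) (hψ : W2infPer ψ) (hψ0 : ∀ y : ℝ, 0 ≤ ψ y)
    (hu : IsTempSol c ψ u)
    (hbdd : ∃ M : ℝ, ∀ p ∈ OmegaCl ψ, |u p| ≤ M) :
    ∀ p ∈ OmegaCl ψ, 0 ≤ u p ∧ u p ≤ Real.exp (c * p.1) := by
  have hψcont : Continuous ψ := hψ.contDiff.continuous
  have hbcval : ∀ y : ℝ, fderivWithin ℝ u (OmegaCl ψ) (ψ y, y) (1, -deriv ψ y) = c := by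
    intro y
    have h := hu.bc y
    have hs : Real.sqrt (1 + deriv ψ y ^ 2) ≠ 0 := by
      have : (0:ℝ) < 1 + deriv ψ y ^ 2 := by positivity
      exact (Real.sqrt_pos.2 this).ne'
    field_simp [hs] at h
    exact h
  have hudw : ∀ y : ℝ, DifferentiableWithinAt ℝ u (OmegaCl ψ) (ψ y, y) := by
    intro y
    exact (hu.c1.differentiableOn one_ne_zero) (ψ y, y) (le_refl (ψ y))
  -- lower bound
  have hlow : ∀ p ∈ OmegaCl ψ, 0 ≤ u p := by
    apply temp_nonneg c ψ u hc hψ.periodic hψ.contDiff hψ0 hu.periodic hu.contOn hu.c2 hu.pde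
    · intro y
      refine ⟨fderivWithin ℝ u (OmegaCl ψ) (ψ y, y), (hudw y).hasFDerivWithinAt, ?_⟩
      rw [hbcval y]
      exact hc.le
    · intro ε hε
      obtain ⟨X, hX⟩ := hu.decay ε hε
      exact ⟨X, fun p hp h1 => neg_le_of_abs_le (hX p hp h1)⟩
  -- upper bound
  have hup : ∀ p ∈ OmegaCl ψ, 0 ≤ Real.exp (c * p.1) - u p := by
    apply temp_nonneg c ψ (fun p => Real.exp (c * p.1) - u p) hc hψ.periodic hψ.contDiff hψ0
    · intro x y
      simp only [hu.periodic x y]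
    · exact (Continuous.continuousOn (by fun_prop)).sub hu.contOn
    · exact (ContDiff.contDiffOn (by fun_prop)).sub hu.c2
    · intro p hp
      have hcomb := comb_pdx_lap u (Omega ψ) (isOpen_Omega hψcont) hu.c2 (-1) 1 c hp
      have hfun : (fun q : ℝ × ℝ => Real.exp (c * q.1) - u q)
          = fun q => (-1) * u q + 1 * Real.exp (c * q.1) := by
        funext r
        ring
      rw [hfun, hcomb.1, hcomb.2]
      linear_combination (-1 : ℝ) * hu.pde p hp
    · intro y
      refine ⟨((c * Real.exp (c * ψ y)) • ContinuousLinearMap.fst ℝ ℝ ℝ)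
        - fderivWithin ℝ u (OmegaCl ψ) (ψ y, y), ?_, ?_⟩
      · exact ((hasFDerivAt_expx c (ψ y, y)).hasFDerivWithinAt).sub (hudw y).hasFDerivWithinAt
      · have h1 : (((c * Real.exp (c * ψ y)) • ContinuousLinearMap.fst ℝ ℝ ℝ)
            - fderivWithin ℝ u (OmegaCl ψ) (ψ y, y)) (1, -deriv ψ y)
            = c * Real.exp (c * ψ y) - c := by
          rw [ContinuousLinearMap.sub_apply, hbcval y]
          simp
        rw [h1]
        have h2 : (1:ℝ) ≤ Real.exp (c * ψ y) := by
          rw [← Real.exp_zero]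
          apply Real.exp_le_exp.2
          have := hψ0 y
          positivity
        nlinarith
    · intro ε hε
      obtain ⟨X, hX⟩ := hu.decay ε hε
      refine ⟨X, fun p hp h1 => ?_⟩
      have h2 : u p ≤ ε := le_of_abs_le (hX p hp h1)
      have h3 : 0 < Real.exp (c * p.1) := Real.exp_pos _
      linarith
  intro p hp
  refine ⟨hlow p hp, ?_⟩
  have := hup p hp
  linarith
end
end

section
/- Let G : ℝ → ℝ be continuous and let R > 0. Then there exists r > 0 such that for every function h : 𝕋 → ℝ which is Lipschitz with |h'(y)| ≤ G(h(y)) for almost every y ∈ 𝕋, and every y₀ ∈ 𝕋 with |h(y₀)| ≤ R, one has |h(y)| ≤ 2R for all y in the ball B(y₀, r) of 𝕋. -/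
open MeasureTheory Set Filter
open scoped NNReal
open intervalIntegral
open scoped Topology

lemma abs_deriv_le_of_lipschitz' {h : ℝ → ℝ} {L : ℝ≥0} (hl : LipschitzWith L h) (x : ℝ) :
    |deriv h x| ≤ L := by
  have h1 : ‖fderiv ℝ h x‖ ≤ (L : ℝ) := norm_fderiv_le_of_lipschitz ℝ hl
  calc |deriv h x| = ‖fderiv ℝ h x 1‖ := rfl
    _ ≤ ‖fderiv ℝ h x‖ * ‖(1:ℝ)‖ := (fderiv ℝ h x).le_opNorm 1
    _ ≤ L := by simpa using h1

lemma lip_integral_deriv' (h : ℝ → ℝ) (L : ℝ≥0) (hl : LipschitzWith L h)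
    (a b : ℝ) (hab : a ≤ b) :
    ∫ x in Set.Ioc a b, deriv h x = h b - h a := by
  have hcont : Continuous h := hl.continuous
  set μ := volume.restrict (Set.Ioc a b) with hμ
  set ε : ℕ → ℝ := fun n => 1 / (n + 1) with hε
  have hεpos : ∀ n, 0 < ε n := fun n => by positivity
  have hε0 : Tendsto ε atTop (𝓝 0) := tendsto_one_div_add_atTop_nhds_zero_nat
  set g : ℕ → ℝ → ℝ := fun n x => (h (x + ε n) - h x) / ε n with hg
  have hb : ∀ n x, ‖g n x‖ ≤ (L : ℝ) := by
    intro n x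
    have : |h (x + ε n) - h x| ≤ L * |x + ε n - x| := hl.dist_le_mul _ _
    simp only [add_sub_cancel_left, abs_of_pos (hεpos n)] at this
    rw [hg]
    simp only [Real.norm_eq_abs, abs_div, abs_of_pos (hεpos n)]
    rw [div_le_iff₀ (hεpos n)]
    simpa using this
  have hlim : ∀ᵐ x ∂μ, Tendsto (fun n => g n x) atTop (𝓝 (deriv h x)) := by
    refine ae_restrict_of_ae ?_
    filter_upwards [hl.ae_differentiableAt_of_real] with x hx
    have hd : HasDerivAt h (deriv h x) x := hx.hasDerivAt
    have hslope := hasDerivAt_iff_tendsto_slope.mp hd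
    have hseq : Tendsto (fun n => x + ε n) atTop (𝓝[≠] x) := by
      refine tendsto_nhdsWithin_iff.2 ⟨?_, ?_⟩
      · simpa using (tendsto_const_nhds (x := x)).add hε0
      · exact Eventually.of_forall fun n => by
          simp [ne_of_gt, (hεpos n).ne']
    have := hslope.comp hseq
    refine this.congr fun n => ?_
    simp [slope_def_field, hg]
  have hmeas : ∀ n, AEStronglyMeasurable (g n) μ := by
    intro n
    have : Continuous (g n) := by rw [hg]; fun_prop
    exact this.aestronglyMeasurable
  have hboundInt : Integrable (fun _ : ℝ => (L : ℝ)) μ := by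
    rw [hμ]
    exact integrableOn_const (by simp [Real.volume_Ioc])
  have hDCT : Tendsto (fun n => ∫ x, g n x ∂μ) atTop (𝓝 (∫ x, deriv h x ∂μ)) := by
    refine tendsto_integral_of_dominated_convergence _ hmeas hboundInt
      (fun n => Eventually.of_forall fun x => hb n x) hlim
  have hint : ∀ c d : ℝ, IntervalIntegrable h volume c d := fun c d =>
    hcont.intervalIntegrable c d
  have hcompute : ∀ n, ∫ x, g n x ∂μ =
      ((∫ x in b..(b + ε n), h x) - ∫ x in a..(a + ε n), h x) / ε n := by
    intro n
    have h1 : ∫ x, g n x ∂μ = ∫ x in a..b, g n x := (integral_of_le hab).symm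
    rw [h1, hg]
    simp only
    rw [intervalIntegral.integral_div]
    congr 1
    have hA : IntervalIntegrable (fun x => h (x + ε n)) volume a b :=
      (show Continuous fun x => h (x + ε n) by fun_prop).intervalIntegrable _ _
    rw [intervalIntegral.integral_sub hA (hint a b)]
    have h2 : (∫ x in a..b, h (x + ε n)) = ∫ x in (a + ε n)..(b + ε n), h x :=
      integral_comp_add_right h (ε n)
    have h3 : (∫ x in a..(a + ε n), h x) + (∫ x in (a + ε n)..(b + ε n), h x)
        = ∫ x in a..(b + ε n), h x := integral_add_adjacent_intervals (hint _ _) (hint _ _)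
    have h4 : (∫ x in a..b, h x) + (∫ x in b..(b + ε n), h x)
        = ∫ x in a..(b + ε n), h x := integral_add_adjacent_intervals (hint _ _) (hint _ _)
    rw [h2]
    linarith
  have hbdry : ∀ c : ℝ, Tendsto (fun n => (∫ x in c..(c + ε n), h x) / ε n) atTop (𝓝 (h c)) := by
    intro c
    have hF : HasDerivAt (fun t => ∫ x in c..t, h x) (h c) c :=
      integral_hasDerivAt_right (hint c c)
        hcont.stronglyMeasurable.stronglyMeasurableAtFilter hcont.continuousAt
    have hslope := hasDerivAt_iff_tendsto_slope.mp hF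
    have hseq : Tendsto (fun n => c + ε n) atTop (𝓝[≠] c) := by
      refine tendsto_nhdsWithin_iff.2 ⟨?_, ?_⟩
      · simpa using (tendsto_const_nhds (x := c)).add hε0
      · exact Eventually.of_forall fun n => by simp [ne_of_gt, (hεpos n).ne']
    have := hslope.comp hseq
    refine this.congr fun n => ?_
    simp [slope_def_field, Function.comp, integral_same]
  have hlim2 : Tendsto (fun n => ∫ x, g n x ∂μ) atTop (𝓝 (h b - h a)) := by
    have := (hbdry b).sub (hbdry a)
    refine this.congr fun n => ?_
    rw [hcompute n, sub_div]
  exact tendsto_nhds_unique hDCT hlim2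

lemma abs_sub_le_of_ae_deriv_le' (h : ℝ → ℝ) (L : ℝ≥0) (hl : LipschitzWith L h)
    (a b C : ℝ) (hab : a ≤ b)
    (hd : ∀ᵐ x : ℝ, x ∈ Set.Ioo a b → |deriv h x| ≤ C) :
    |h b - h a| ≤ C * (b - a) := by
  rw [← lip_integral_deriv' h L hl a b hab]
  set μ := volume.restrict (Set.Ioc a b) with hμ
  have hCint : Integrable (fun _ : ℝ => C) μ := by
    rw [hμ]; exact integrableOn_const (by simp [Real.volume_Ioc])
  have hne : ∀ᵐ x : ℝ, x ≠ b := by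
    rw [ae_iff]
    have : {x : ℝ | ¬x ≠ b} = {b} := by ext x; simp
    rw [this]
    exact Real.volume_singleton
  have hbd : ∀ᵐ x ∂μ, ‖deriv h x‖ ≤ C := by
    filter_upwards [ae_restrict_mem measurableSet_Ioc, ae_restrict_of_ae hd,
      ae_restrict_of_ae hne] with x hx1 hx2 hx3
    exact hx2 ⟨hx1.1, lt_of_le_of_ne hx1.2 hx3⟩
  have := norm_integral_le_of_norm_le hCint hbd
  calc |∫ x, deriv h x ∂μ| ≤ ∫ _, C ∂μ := this
    _ = C * (b - a) := by
        rw [hμ, setIntegral_const, measureReal_def, Real.volume_Ioc, smul_eq_mul,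
          ENNReal.toReal_ofReal (by linarith), mul_comm]

lemma forward_prop' (G : ℝ → ℝ) (R M : ℝ) (hR : 0 < R)
    (hM : ∀ x ∈ Set.Icc (-(2 * R)) (2 * R), |G x| ≤ M)
    (h : ℝ → ℝ) (L : ℝ≥0) (hl : LipschitzWith L h)
    (hder : ∀ᵐ y : ℝ, |deriv h y| ≤ G (h y))
    (a b : ℝ) (hab : a ≤ b) (hlt : (M + 1) * (b - a) < R) (ha : |h a| ≤ R) :
    |h b| ≤ 2 * R := by
  have hM0 : 0 ≤ M := le_trans (abs_nonneg _) (hM 0 ⟨by linarith, by linarith⟩)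
  by_contra hcon
  push_neg at hcon
  set S : Set ℝ := Set.Icc a b ∩ {s | 2 * R ≤ |h s|} with hS
  have hbS : b ∈ S := ⟨⟨hab, le_rfl⟩, hcon.le⟩
  have hSclosed : IsClosed S :=
    isClosed_Icc.inter (isClosed_le continuous_const (continuous_abs.comp hl.continuous))
  have hbdd : BddBelow S := ⟨a, fun s hs => hs.1.1⟩
  set τ := sInf S with hτ
  have hτS : τ ∈ S := hSclosed.csInf_mem ⟨b, hbS⟩ hbdd
  have hτab : τ ∈ Set.Icc a b := hτS.1
  have hτ2R : 2 * R ≤ |h τ| := hτS.2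
  have haτ : a < τ := by
    rcases lt_or_eq_of_le hτab.1 with hlt' | heq
    · exact hlt'
    · exfalso; rw [← heq] at hτ2R; linarith
  have hd' : ∀ᵐ x : ℝ, x ∈ Set.Ioo a τ → |deriv h x| ≤ M + 1 := by
    filter_upwards [hder] with x hx hmem
    have hxS : x ∉ S := fun hxx => absurd (csInf_le hbdd hxx) (not_le.2 hmem.2)
    have hxIcc : x ∈ Set.Icc a b := ⟨hmem.1.le, le_trans hmem.2.le hτab.2⟩
    have hx2R : ¬(2 * R ≤ |h x|) := fun hge => hxS ⟨hxIcc, hge⟩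
    push_neg at hx2R
    have habs : |h x| ≤ 2 * R := hx2R.le
    have hmem' : h x ∈ Set.Icc (-(2 * R)) (2 * R) := abs_le.1 habs
    calc |deriv h x| ≤ G (h x) := hx
      _ ≤ |G (h x)| := le_abs_self _
      _ ≤ M := hM _ hmem'
      _ ≤ M + 1 := by linarith
  have hkey : |h τ - h a| ≤ (M + 1) * (τ - a) :=
    abs_sub_le_of_ae_deriv_le' h L hl a τ (M + 1) haτ.le hd'
  have h2 : (M + 1) * (τ - a) ≤ (M + 1) * (b - a) := by
    apply mul_le_mul_of_nonneg_left _ (by linarith)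
    linarith [hτab.2]
  have : |h τ| ≤ |h a| + |h τ - h a| := by
    calc |h τ| = |h a + (h τ - h a)| := by ring_nf
      _ ≤ |h a| + |h τ - h a| := abs_add_le _ _
  linarith


/-- Let `G : ℝ → ℝ` be continuous and `R > 0`. Then there is `r > 0` such that for every
Lipschitz function `h` on the torus `𝕋 = ℝ/ℤ` (identified with a 1-periodic Lipschitz
function on `ℝ`) with `|h'(y)| ≤ G(h(y))` a.e., and every `y₀` with `|h(y₀)| ≤ R`, one
has `|h(y)| ≤ 2R` on the ball `B(y₀, r)` of `𝕋`. -/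
theorem bounded_propagation_of_ode_bound
    (G : ℝ → ℝ) (hG : Continuous G) (R : ℝ) (hR : 0 < R) :
    ∃ r > 0, ∀ (h : ℝ → ℝ) (L : ℝ≥0), Function.Periodic h 1 → LipschitzWith L h →
      (∀ᵐ y : ℝ, |deriv h y| ≤ G (h y)) →
      ∀ y₀ : ℝ, |h y₀| ≤ R → ∀ y : ℝ, |y - y₀| < r → |h y| ≤ 2 * R := by
  obtain ⟨M, hM⟩ :=
    (isCompact_Icc (a := -(2 * R)) (b := 2 * R)).exists_bound_of_continuousOn hG.continuousOn
  have hM' : ∀ x ∈ Set.Icc (-(2 * R)) (2 * R), |G x| ≤ M := fun x hx => hM x hx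
  have hM0 : 0 ≤ M := le_trans (abs_nonneg _) (hM' 0 ⟨by linarith, by linarith⟩)
  have hM1 : (0:ℝ) < M + 1 := by linarith
  refine ⟨R / (M + 1), by positivity, ?_⟩
  intro h L _hper hl hder y₀ hy₀ y hy
  have hlt : (M + 1) * |y - y₀| < R := by
    rw [lt_div_iff₀ hM1] at hy
    linarith [hy]
  rcases le_total y₀ y with hc | hc
  · have : (M + 1) * (y - y₀) < R := by
      rwa [abs_of_nonneg (by linarith)] at hlt
    exact forward_prop' G R M hR hM' h L hl hder y₀ y hc this hy₀
  · -- reflect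
    set g : ℝ → ℝ := fun t => h (-t) with hgdef
    have hneg : LipschitzWith 1 (fun t : ℝ => -t) :=
      LipschitzWith.of_dist_le_mul fun x y => by
        simp only [Real.dist_eq, NNReal.coe_one, one_mul]
        rw [show -x - -y = -(x - y) by ring, abs_neg]
    have hlg : LipschitzWith L g := by
      have := hl.comp hneg
      rw [mul_one] at this
      exact this
    have hmp := (Measure.measurePreserving_neg (volume : Measure ℝ)).quasiMeasurePreserving
    have h1 : ∀ᵐ x : ℝ, |deriv h x| ≤ G (h x) ∧ DifferentiableAt ℝ h x :=
      hder.and hl.ae_differentiableAt_of_real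
    have h2 : ∀ᵐ t : ℝ, |deriv h (-t)| ≤ G (h (-t)) ∧ DifferentiableAt ℝ h (-t) := hmp.ae h1
    have hderg : ∀ᵐ t : ℝ, |deriv g t| ≤ G (g t) := by
      filter_upwards [h2] with t ht
      obtain ⟨hbt, hdt⟩ := ht
      have hg' : HasDerivAt g (deriv h (-t) * (-1)) t :=
        (hdt.hasDerivAt).comp t (hasDerivAt_neg t)
      rw [hg'.deriv]
      simpa [abs_mul] using hbt
    have hstart : |g (-y₀)| ≤ R := by simpa [hgdef] using hy₀
    have hab : -y₀ ≤ -y := by linarith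
    have hlt' : (M + 1) * (-y - -y₀) < R := by
      rw [abs_of_nonpos (by linarith)] at hlt
      linarith [hlt]
    have := forward_prop' G R M hR hM' g L hlg hderg (-y₀) (-y) hab hlt' hstart
    simpa [hgdef] using this
end

section
/- For each n ∈ ℕ let ψₙ : 𝕋 → ℝ be continuous with ψₙ ≥ 0, and set Ωₙ := {(x,y) ∈ ℝ × 𝕋 : x < ψₙ(y)} and Ω_∞ := ⋃ₙ int(⋂_{k ≥ n} Ω_k). Suppose ȳ ∈ 𝕋 is such that the point (0,ȳ) lies on the topological boundary of Ω_∞ in ℝ × 𝕋. Then there exist a strictly increasing sequence of natural numbers (n_p)_p and points w_p ∈ 𝕋 such that w_p → ȳ and ψ_{n_p}(w_p) → 0 as p → ∞. -/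
set_option maxHeartbeats 1000000


open Filter Set

/-- For continuous `ψₙ ≥ 0` on the torus `𝕋 = ℝ/ℤ`, set `Ωₙ = {(x,y) : x < ψₙ(y)}`
and `Ω_∞ = ⋃ₙ int(⋂_{k ≥ n} Ω_k)`. If `(0, ȳ)` lies on the topological boundary of
`Ω_∞` in `ℝ × 𝕋`, then there are a strictly increasing sequence `(n_p)` and points
`w_p ∈ 𝕋` with `w_p → ȳ` and `ψ_{n_p}(w_p) → 0`. -/
theorem frontier_point_of_limit_domain
    (ψ : ℕ → AddCircle (1 : ℝ) → ℝ)
    (hcont : ∀ n, Continuous (ψ n)) (hpos : ∀ n y, 0 ≤ ψ n y)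
    (ybar : AddCircle (1 : ℝ))
    (hfrontier : ((0 : ℝ), ybar) ∈ frontier
      (⋃ n : ℕ, interior (⋂ (k : ℕ) (_ : n ≤ k),
        {p : ℝ × AddCircle (1 : ℝ) | p.1 < ψ k p.2}))) :
    ∃ (np : ℕ → ℕ) (w : ℕ → AddCircle (1 : ℝ)), StrictMono np ∧
      Tendsto w atTop (nhds ybar) ∧
      Tendsto (fun p => ψ (np p) (w p)) atTop (nhds 0) := by
  set T : ℕ → Set (ℝ × AddCircle (1 : ℝ)) :=
    fun n => ⋂ (k : ℕ) (_ : n ≤ k), {p : ℝ × AddCircle (1 : ℝ) | p.1 < ψ k p.2} with hT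
  set S : Set (ℝ × AddCircle (1 : ℝ)) := ⋃ n : ℕ, interior (T n) with hS
  have hhalf : {p : ℝ × AddCircle (1 : ℝ) | p.1 < 0} ⊆ S := by
    intro z hz
    refine mem_iUnion.2 ⟨0, ?_⟩
    refine mem_interior.2 ⟨{p : ℝ × AddCircle (1 : ℝ) | p.1 < 0}, ?_,
      isOpen_lt continuous_fst continuous_const, hz⟩
    intro q hq
    simp only [hT, mem_iInter, mem_setOf_eq]
    intro k _
    exact lt_of_lt_of_le hq (hpos k q.2)
  have hnotint : ((0 : ℝ), ybar) ∉ interior S := by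
    rw [frontier] at hfrontier
    exact hfrontier.2
  have dfst : ∀ (u v : ℝ × AddCircle (1 : ℝ)), dist u.1 v.1 ≤ dist u v := fun u v => by
    rw [Prod.dist_eq]; exact le_max_left _ _
  have dsnd : ∀ (u v : ℝ × AddCircle (1 : ℝ)), dist u.2 v.2 ≤ dist u v := fun u v => by
    rw [Prod.dist_eq]; exact le_max_right _ _
  have key : ∀ p n : ℕ, ∃ k, n ≤ k ∧ ∃ w, dist w ybar ≤ 2 / ((p : ℝ) + 1) ∧
      ψ k w ≤ 2 / ((p : ℝ) + 1) := by
    intro p n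
    have hε : (0 : ℝ) < 1 / ((p : ℝ) + 1) := by positivity
    have hz : ∃ z ∈ Metric.ball (((0 : ℝ), ybar)) (1 / ((p : ℝ) + 1)), z ∉ S := by
      by_contra h
      push_neg at h
      exact hnotint (mem_interior.2 ⟨_, fun q hq => h q hq, Metric.isOpen_ball,
        Metric.mem_ball_self hε⟩)
    obtain ⟨z, hzball, hzS⟩ := hz
    have hz1 : (0 : ℝ) ≤ z.1 := by
      by_contra h
      push_neg at h
      exact hzS (hhalf h)
    have hzd : dist z ((0 : ℝ), ybar) < 1 / ((p : ℝ) + 1) := Metric.mem_ball.1 hzball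
    have hz1' : z.1 < 1 / ((p : ℝ) + 1) := by
      have h1 : dist z.1 (0 : ℝ) ≤ dist z ((0 : ℝ), ybar) := dfst z ((0 : ℝ), ybar)
      have := lt_of_le_of_lt h1 hzd
      rwa [Real.dist_eq, sub_zero, abs_of_nonneg hz1] at this
    have hz2 : dist z.2 ybar < 1 / ((p : ℝ) + 1) :=
      lt_of_le_of_lt (dsnd z ((0 : ℝ), ybar)) hzd
    have hzT : z ∉ interior (T n) := fun h => hzS (mem_iUnion.2 ⟨n, h⟩)
    have hq : ∃ q ∈ Metric.ball z (1 / ((p : ℝ) + 1)), q ∉ T n := by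
      by_contra h
      push_neg at h
      exact hzT (mem_interior.2 ⟨_, fun q hq => h q hq, Metric.isOpen_ball,
        Metric.mem_ball_self hε⟩)
    obtain ⟨q, hqball, hqT⟩ := hq
    simp only [hT, mem_iInter, mem_setOf_eq, not_forall, not_lt] at hqT
    obtain ⟨k, hk, hkq⟩ := hqT
    have hqd : dist q z < 1 / ((p : ℝ) + 1) := Metric.mem_ball.1 hqball
    refine ⟨k, hk, q.2, ?_, ?_⟩
    · calc dist q.2 ybar ≤ dist q.2 z.2 + dist z.2 ybar := dist_triangle _ _ _
        _ ≤ dist q z + dist z.2 ybar := by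
            exact add_le_add (dsnd _ _) le_rfl
        _ ≤ 1 / ((p : ℝ) + 1) + 1 / ((p : ℝ) + 1) := add_le_add hqd.le hz2.le
        _ = 2 / ((p : ℝ) + 1) := by ring
    · have hq1 : q.1 ≤ z.1 + dist q.1 z.1 := by
        have := abs_sub_le_iff.1 (le_refl |q.1 - z.1|)
        have h' : q.1 - z.1 ≤ |q.1 - z.1| := le_abs_self _
        rw [Real.dist_eq]
        linarith
      calc ψ k q.2 ≤ q.1 := hkq
        _ ≤ z.1 + dist q.1 z.1 := hq1
        _ ≤ z.1 + dist q z := add_le_add_right (dfst _ _) _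
        _ ≤ 1 / ((p : ℝ) + 1) + 1 / ((p : ℝ) + 1) := add_le_add hz1'.le hqd.le
        _ = 2 / ((p : ℝ) + 1) := by ring
  choose f hf wf hwf1 hwf2 using key
  set a : ℕ → ℕ := fun p => Nat.rec 0 (fun q ih => f q ih + 1) p with ha
  refine ⟨fun p => f p (a p), fun p => wf p (a p), ?_, ?_, ?_⟩
  · apply strictMono_nat_of_lt_succ
    intro p
    have h1 : a (p + 1) = f p (a p) + 1 := rfl
    have h2 := hf (p + 1) (a (p + 1))
    omega
  · have hlim : Tendsto (fun p : ℕ => 2 / ((p : ℝ) + 1)) atTop (nhds 0) := by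
      have := tendsto_one_div_add_atTop_nhds_zero_nat (𝕜 := ℝ)
      have h2 := this.const_mul (2 : ℝ)
      simp only [mul_zero] at h2
      convert h2 using 2 with p
      ring
    have hd : Tendsto (fun p => dist (wf p (a p)) ybar) atTop (nhds 0) :=
      squeeze_zero (fun p => dist_nonneg) (fun p => hwf1 p (a p)) hlim
    exact tendsto_iff_dist_tendsto_zero.2 hd
  · have hlim : Tendsto (fun p : ℕ => 2 / ((p : ℝ) + 1)) atTop (nhds 0) := by
      have := tendsto_one_div_add_atTop_nhds_zero_nat (𝕜 := ℝ)
      have h2 := this.const_mul (2 : ℝ)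
      simp only [mul_zero] at h2
      convert h2 using 2 with p
      ring
    exact squeeze_zero (fun p => hpos _ _) (fun p => hwf2 p (a p)) hlim
end

section
/- Let G : ℝ → ℝ be continuous. For each n ∈ ℕ let ψₙ : 𝕋 → ℝ be C¹ with Lipschitz derivative, satisfying |ψₙ''(y)| ≤ G(ψₙ'(y)) for almost every y ∈ 𝕋. Let ȳ ∈ 𝕋 and let (wₙ)ₙ, (w̃ₙ)ₙ be sequences in 𝕋 with wₙ → ȳ, w̃ₙ → ȳ, ψₙ(wₙ) → 0 and ψₙ'(w̃ₙ) → 0 as n → ∞. Then there exist ε₀ > 0, a constant C ≥ 0 and N ∈ ℕ such that for all n ≥ N one has |ψₙ(y)| ≤ C and |ψₙ'(y)| ≤ C for all y ∈ B(ȳ, ε₀) and |ψₙ''(y)| ≤ C for almost every y ∈ B(ȳ, ε₀); moreover some subsequence of (ψₙ)ₙ converges uniformly on B(ȳ, ε₀) to a function ψ̄ which is C¹ with Lipschitz derivative on B(ȳ, ε₀). -/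
open Filter Set MeasureTheory
open scoped NNReal
open scoped Interval

lemma lipschitz_integral_deriv {h : ℝ → ℝ} {L : ℝ≥0} (hL : LipschitzWith L h)
    {a b : ℝ} (hab : a ≤ b) : ∫ x in a..b, deriv h x = h b - h a := by
  have hc : Continuous h := hL.continuous
  set u : ℕ → ℝ := fun k => ((k : ℝ) + 1)⁻¹ with hu
  have hu_pos : ∀ k, 0 < u k := fun k => by positivity
  have hu_lim : Tendsto u atTop (nhds 0) := tendsto_one_div_add_atTop_nhds_zero_nat.congr
    (by intro k; simp [hu, one_div])
  set F : ℕ → ℝ → ℝ := fun k x => (h (x + u k) - h x) / u k with hF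
  have hmeas : ∀ k, AEStronglyMeasurable (F k) (volume.restrict (Ioc a b)) := by
    intro k
    exact (((hc.comp (continuous_id.add continuous_const)).sub hc).div_const _).aestronglyMeasurable
  have hbound : ∀ k, ∀ᵐ x ∂(volume.restrict (Ioc a b)), ‖F k x‖ ≤ (L : ℝ) := by
    intro k
    refine Eventually.of_forall fun x => ?_
    have h1 : |h (x + u k) - h x| ≤ (L : ℝ) * |(x + u k) - x| := by
      simpa [Real.dist_eq] using hL.dist_le_mul (x + u k) x
    have h2 : |(x + u k) - x| = u k := by
      simp [abs_of_pos (hu_pos k)]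
    rw [hF]
    simp only [Real.norm_eq_abs, abs_div, abs_of_pos (hu_pos k)]
    rw [div_le_iff₀ (hu_pos k)]
    calc |h (x + u k) - h x| ≤ (L : ℝ) * u k := by rw [h2] at h1; exact h1
    _ = _ := by ring
  have hae : ∀ᵐ x ∂(volume.restrict (Ioc a b)),
      Tendsto (fun k => F k x) atTop (nhds (deriv h x)) := by
    refine ae_restrict_of_ae ?_
    filter_upwards [hL.ae_differentiableAt_of_real] with x hx
    have hd : HasDerivAt h (deriv h x) x := hx.hasDerivAt
    rw [hasDerivAt_iff_tendsto_slope] at hd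
    have hxs : Tendsto (fun k => x + u k) atTop (nhdsWithin x {x}ᶜ) := by
      refine tendsto_nhdsWithin_iff.2 ⟨?_, Eventually.of_forall fun k => ?_⟩
      · simpa using tendsto_const_nhds.add hu_lim
      · simp [(hu_pos k).ne']
    have := hd.comp hxs
    refine this.congr fun k => ?_
    simp [slope_def_field, hF, div_eq_inv_mul]
  have hint : Integrable (fun _ : ℝ => (L : ℝ)) (volume.restrict (Ioc a b)) :=
    integrable_const _
  have fact2 : Tendsto (fun k => ∫ x in Ioc a b, F k x) atTop
      (nhds (∫ x in Ioc a b, deriv h x)) :=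
    tendsto_integral_of_dominated_convergence _ hmeas hint hbound hae
  have hInt : ∀ c d : ℝ, IntervalIntegrable h volume c d := fun c d =>
    hc.intervalIntegrable c d
  have key : ∀ k, ∫ x in Ioc a b, F k x =
      (u k)⁻¹ * ((∫ x in b..(b + u k), h x) - ∫ x in a..(a + u k), h x) := by
    intro k
    have e1 : ∫ x in Ioc a b, F k x = ∫ x in a..b, (h (x + u k) - h x) / u k := by
      rw [intervalIntegral.integral_of_le hab]
    rw [e1]
    have e2 : ∀ x, (h (x + u k) - h x) / u k = (u k)⁻¹ * (h (x + u k) - h x) := by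
      intro x; ring
    simp_rw [e2]
    rw [intervalIntegral.integral_const_mul]
    congr 1
    have e3 : ∫ x in a..b, (h (x + u k) - h x) =
        (∫ x in a..b, h (x + u k)) - ∫ x in a..b, h x := by
      apply intervalIntegral.integral_sub
      · exact (hc.comp (continuous_add_right (u k))).intervalIntegrable a b
      · exact hInt a b
    rw [e3, intervalIntegral.integral_comp_add_right]
    have e4 : ∫ x in (a + u k)..(b + u k), h x =
        (∫ x in (a + u k)..b, h x) + ∫ x in b..(b + u k), h x := by
      rw [intervalIntegral.integral_add_adjacent_intervals (hInt _ _) (hInt _ _)]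
    have e5 : ∫ x in a..b, h x =
        (∫ x in a..(a + u k), h x) + ∫ x in (a + u k)..b, h x := by
      rw [intervalIntegral.integral_add_adjacent_intervals (hInt _ _) (hInt _ _)]
    rw [e4, e5]; ring
  have slope_tendsto : ∀ c : ℝ, Tendsto (fun k => (u k)⁻¹ * ∫ x in c..(c + u k), h x)
      atTop (nhds (h c)) := by
    intro c
    have hd : HasDerivAt (fun y => ∫ x in c..y, h x) (h c) c :=
      intervalIntegral.integral_hasDerivAt_right (hInt c c)
        (hc.stronglyMeasurableAtFilter _ _) hc.continuousAt
    rw [hasDerivAt_iff_tendsto_slope] at hd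
    have hxs : Tendsto (fun k => c + u k) atTop (nhdsWithin c {c}ᶜ) := by
      refine tendsto_nhdsWithin_iff.2 ⟨?_, Eventually.of_forall fun k => ?_⟩
      · simpa using tendsto_const_nhds.add hu_lim
      · simp [(hu_pos k).ne']
    have := hd.comp hxs
    refine this.congr fun k => ?_
    simp [slope_def_field, div_eq_inv_mul, intervalIntegral.integral_same]
  have fact1 : Tendsto (fun k => ∫ x in Ioc a b, F k x) atTop (nhds (h b - h a)) := by
    simp_rw [key]
    have := (slope_tendsto b).sub (slope_tendsto a)
    refine this.congr fun k => ?_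
    ring
  have := tendsto_nhds_unique fact2 fact1
  rw [intervalIntegral.integral_of_le hab]
  exact this

lemma lip_ae_bound {h : ℝ → ℝ} {L : ℝ≥0} (hL : LipschitzWith L h) {M : ℝ} (hM0 : 0 ≤ M)
    {a b : ℝ} (hb : ∀ᵐ x : ℝ, x ∈ Ι a b → |deriv h x| ≤ M) :
    |h b - h a| ≤ M * |b - a| := by
  have key : ∀ c d : ℝ, c ≤ d → (∀ᵐ x : ℝ, x ∈ Ι c d → |deriv h x| ≤ M) →
      |h d - h c| ≤ M * |d - c| := by
    intro c d hcd hb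
    rw [← lipschitz_integral_deriv hL hcd]
    have h1 : ∀ᵐ t ∂(volume.restrict (Ι c d)), ‖deriv h t‖ ≤ (fun _ : ℝ => M) t := by
      rw [ae_restrict_iff' measurableSet_uIoc]
      filter_upwards [hb] with t ht hmem
      simpa [Real.norm_eq_abs] using ht hmem
    have h2 : |∫ t in c..d, deriv h t| ≤ |∫ t in c..d, (fun _ : ℝ => M) t| := by
      have := (intervalIntegral.norm_integral_le_of_norm_le hcd (by
        rw [ae_restrict_iff' measurableSet_uIoc] at h1
        filter_upwards [h1] with t ht hmem
        exact ht (by rw [uIoc_of_le hcd]; exact hmem)) (intervalIntegrable_const (c := M))).trans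
        (le_abs_self _)
      rwa [Real.norm_eq_abs] at this
    have h3 : |∫ t in c..d, (fun _ : ℝ => M) t| = M * |d - c| := by
      rw [intervalIntegral.integral_const, smul_eq_mul, abs_mul, abs_of_nonneg hM0]
      ring
    calc |∫ t in c..d, deriv h t| ≤ |∫ t in c..d, (fun _ : ℝ => M) t| := h2
    _ = M * |d - c| := h3
  rcases le_total a b with hab | hab
  · exact key a b hab hb
  · have h4 := key b a hab (by simpa [Set.uIoc_comm a b] using hb)
    calc |h b - h a| = |h a - h b| := abs_sub_comm _ _
    _ ≤ M * |a - b| := h4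
    _ = M * |b - a| := by rw [abs_sub_comm]

/-- **Local `W^{2,∞}` compactness of the fronts.** Let `G` be continuous and let
`ψₙ : 𝕋 → ℝ` (1-periodic `C¹` functions on `ℝ` with Lipschitz derivative) satisfy
`|ψₙ''| ≤ G(ψₙ')` a.e. If `wₙ → ȳ`, `w̃ₙ → ȳ`, `ψₙ(wₙ) → 0` and `ψₙ'(w̃ₙ) → 0`, then
there exist `ε₀ > 0`, `C ≥ 0` and `N` such that for `n ≥ N`: `|ψₙ| ≤ C`, `|ψₙ'| ≤ C` on
`B(ȳ, ε₀)` and `|ψₙ''| ≤ C` a.e. on `B(ȳ, ε₀)`; moreover a subsequence of `(ψₙ)`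
converges uniformly on `B(ȳ, ε₀)` to some `ψ̄` which is `C¹` with Lipschitz derivative
there. -/
theorem fronts_locally_bounded_W2inf
    (G : ℝ → ℝ) (hG : Continuous G)
    (ψ : ℕ → ℝ → ℝ)
    (hper : ∀ n, Function.Periodic (ψ n) 1)
    (hC1 : ∀ n, ContDiff ℝ 1 (ψ n))
    (hlip : ∀ n, ∃ L : ℝ≥0, LipschitzWith L (deriv (ψ n)))
    (hG2 : ∀ n, ∀ᵐ y : ℝ, |deriv (deriv (ψ n)) y| ≤ G (deriv (ψ n) y))
    (ybar : ℝ) (w wt : ℕ → ℝ)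
    (hw : Tendsto w atTop (nhds ybar)) (hwt : Tendsto wt atTop (nhds ybar))
    (hψw : Tendsto (fun n => ψ n (w n)) atTop (nhds 0))
    (hψwt : Tendsto (fun n => deriv (ψ n) (wt n)) atTop (nhds 0)) :
    ∃ ε₀ > 0, ∃ C ≥ (0 : ℝ), ∃ N : ℕ,
      (∀ n ≥ N, ∀ y ∈ Metric.ball ybar ε₀, |ψ n y| ≤ C ∧ |deriv (ψ n) y| ≤ C) ∧
      (∀ n ≥ N, ∀ᵐ y : ℝ, y ∈ Metric.ball ybar ε₀ → |deriv (deriv (ψ n)) y| ≤ C) ∧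
      ∃ (φ : ℕ → ℕ) (ψbar : ℝ → ℝ) (L : ℝ≥0), StrictMono φ ∧
        TendstoUniformlyOn (fun p => ψ (φ p)) ψbar atTop (Metric.ball ybar ε₀) ∧
        ContDiffOn ℝ 1 ψbar (Metric.ball ybar ε₀) ∧
        LipschitzOnWith L (deriv ψbar) (Metric.ball ybar ε₀) := by
  -- a bound for G on [-1,1]
  obtain ⟨v0, hv0mem, hv0'⟩ := isCompact_Icc.exists_isMaxOn
    (by norm_num : (Icc (-1 : ℝ) 1).Nonempty)
    ((continuous_abs.comp hG).continuousOn (s := Icc (-1 : ℝ) 1))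
  have hv0 : ∀ v ∈ Icc (-1 : ℝ) 1, |G v| ≤ |G v0| := fun v hv => isMaxOn_iff.mp hv0' v hv
  set M : ℝ := max (|G v0|) 1 with hM
  have hM1 : (1 : ℝ) ≤ M := le_max_right _ _
  have hM0 : (0 : ℝ) ≤ M := by linarith
  have hMpos : (0 : ℝ) < M := by linarith
  have hGM : ∀ v : ℝ, |v| ≤ 1 → G v ≤ M := by
    intro v hv
    have h1 : v ∈ Icc (-1 : ℝ) 1 := abs_le.1 hv
    exact (le_abs_self _).trans ((hv0 v h1).trans (le_max_left _ _))
  set δ : ℝ := (16 * M)⁻¹ with hδ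
  have δpos : 0 < δ := by positivity
  have hM2δ : M * (2 * δ) = 1 / 8 := by
    rw [hδ]; field_simp; ring
  have hδ1 : 2 * δ ≤ 1 := by nlinarith
  -- choose N
  have hev : ∀ᶠ n in atTop, |wt n - ybar| < δ ∧ |w n - ybar| < δ ∧
      |deriv (ψ n) (wt n)| ≤ 1 / 2 ∧ |ψ n (w n)| ≤ 1 := by
    have e1 := Metric.tendsto_nhds.mp hwt δ δpos
    have e2 := Metric.tendsto_nhds.mp hw δ δpos
    have e3 := Metric.tendsto_nhds.mp hψwt (1 / 2) (by norm_num)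
    have e4 := Metric.tendsto_nhds.mp hψw 1 (by norm_num)
    filter_upwards [e1, e2, e3, e4] with n h1 h2 h3 h4
    rw [Real.dist_eq] at h1 h2
    rw [Real.dist_eq, sub_zero] at h3 h4
    exact ⟨h1, h2, h3.le, h4.le⟩
  obtain ⟨N, hN⟩ := eventually_atTop.1 hev
  set K : Set ℝ := Metric.closedBall ybar δ with hK
  have hKIcc : K = Icc (ybar - δ) (ybar + δ) := Real.closedBall_eq_Icc
  -- the closed ball is inside the working interval around wt n
  have hball_sub : ∀ n ≥ N, K ⊆ Icc (wt n - 2 * δ) (wt n + 2 * δ) := by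
    intro n hn y hy
    obtain ⟨h1, -, -, -⟩ := hN n hn
    rw [hK, Metric.mem_closedBall, Real.dist_eq] at hy
    have := abs_le.1 hy
    have h1' := abs_le.1 h1.le
    constructor <;> [linarith [this.1, h1'.2]; linarith [this.2, h1'.1] ]
  -- Claim A : |ψₙ'| ≤ 1 on the interval around wt n
  have hD1' : ∀ n ≥ N, ∀ z ∈ Icc (wt n - 2 * δ) (wt n + 2 * δ), |deriv (ψ n) z| ≤ 1 := by
    intro n hn
    obtain ⟨h1, h2, h3, h4⟩ := hN n hn
    obtain ⟨L, hL⟩ := hlip n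
    set f : ℝ → ℝ := deriv (ψ n) with hf
    by_contra hcon
    push_neg at hcon
    obtain ⟨z, hz, hz1⟩ := hcon
    set A : Set ℝ := Icc (wt n - 2 * δ) (wt n + 2 * δ) ∩ {x | 1 ≤ |f x|} with hA
    have hfc : Continuous f := (hC1 n).continuous_deriv le_rfl
    have hA_closed : IsClosed A :=
      isClosed_Icc.inter (isClosed_le continuous_const (continuous_abs.comp hfc))
    have hA_cpt : IsCompact A := isCompact_Icc.of_isClosed_subset hA_closed inter_subset_left
    have hA_ne : A.Nonempty := ⟨z, hz, hz1.le⟩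
    obtain ⟨y₀, hy₀A, hy₀min⟩ := hA_cpt.exists_isMinOn hA_ne
      ((continuous_abs.comp (continuous_id.sub continuous_const)).continuousOn
        (f := fun x => |x - wt n|))
    have hy₀Icc : y₀ ∈ Icc (wt n - 2 * δ) (wt n + 2 * δ) := hy₀A.1
    -- points strictly between wt n and y₀ have |f| < 1
    have hkey : ∀ x ∈ Ι (wt n) y₀, x ≠ y₀ → |f x| < 1 := by
      intro x hx hxne
      by_contra hge
      push_neg at hge
      have hloc : x ∈ Icc (wt n - 2 * δ) (wt n + 2 * δ) ∧ |x - wt n| < |y₀ - wt n| := by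
        rcases le_total (wt n) y₀ with hcase | hcase
        · rw [uIoc_of_le hcase] at hx
          obtain ⟨hx1, hx2⟩ := hx
          have hxlt : x < y₀ := lt_of_le_of_ne hx2 hxne
          constructor
          · exact ⟨by linarith [δpos], by linarith [hy₀Icc.2]⟩
          · rw [abs_of_pos (by linarith), abs_of_nonneg (by linarith)]
            linarith
        · rw [uIoc_comm, uIoc_of_le hcase] at hx
          obtain ⟨hx1, hx2⟩ := hx
          constructor
          · exact ⟨by linarith [hy₀Icc.1], by linarith [δpos]⟩
          · rw [abs_sub_comm, abs_of_nonneg (by linarith), abs_sub_comm,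
              abs_of_nonneg (by linarith)]
            linarith
      have hxA : x ∈ A := ⟨hloc.1, hge⟩
      have := isMinOn_iff.mp hy₀min x hxA
      linarith [hloc.2]
    have hae : ∀ᵐ x : ℝ, x ∈ Ι (wt n) y₀ → |deriv f x| ≤ M := by
      have hne : ∀ᵐ x : ℝ, x ≠ y₀ := by
        have : {x : ℝ | ¬x ≠ y₀} = {y₀} := by ext x; simp
        rw [ae_iff, this]
        exact measure_singleton y₀
      filter_upwards [hG2 n, hne] with x hx hxne hxmem
      exact hx.trans (hGM _ (hkey x hxmem hxne).le)
    have hftc := lip_ae_bound hL hM0 hae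
    have h2δ : |y₀ - wt n| ≤ 2 * δ := abs_le.2 ⟨by linarith [hy₀Icc.1], by linarith [hy₀Icc.2]⟩
    have hchain : (1 : ℝ) ≤ |f y₀| := hy₀A.2
    have htri : |f y₀| ≤ |f (wt n)| + |f y₀ - f (wt n)| := by
      calc |f y₀| = |f (wt n) + (f y₀ - f (wt n))| := by ring_nf
      _ ≤ _ := abs_add_le _ _
    have : |f y₀ - f (wt n)| ≤ M * (2 * δ) :=
      hftc.trans (by nlinarith)
    rw [hM2δ] at this
    linarith
  -- bounds on the closed ball
  have hD1 : ∀ n ≥ N, ∀ y ∈ K, |deriv (ψ n) y| ≤ 1 := fun n hn y hy =>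
    hD1' n hn y (hball_sub n hn hy)
  have hae2 : ∀ n ≥ N, ∀ᵐ x : ℝ, x ∈ K → |deriv (deriv (ψ n)) x| ≤ M := by
    intro n hn
    filter_upwards [hG2 n] with x hx hmem
    exact hx.trans (hGM _ (hD1 n hn x hmem))
  have hconv : Convex ℝ K := convex_closedBall _ _
  have hlipM : ∀ n ≥ N, ∀ x ∈ K, ∀ y ∈ K,
      |deriv (ψ n) x - deriv (ψ n) y| ≤ M * |x - y| := by
    intro n hn x hx y hy
    obtain ⟨L, hL⟩ := hlip n
    have hsub : Ι y x ⊆ K := by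
      have h1 : Ι y x ⊆ uIcc y x := Ioc_subset_Icc_self
      exact h1.trans (hconv.ordConnected.uIcc_subset hy hx)
    refine lip_ae_bound hL hM0 ?_
    filter_upwards [hae2 n hn] with t ht hmem
    exact ht (hsub hmem)
  have hψb : ∀ n ≥ N, ∀ y ∈ K, |ψ n y| ≤ 2 := by
    intro n hn y hy
    obtain ⟨h1, h2, h3, h4⟩ := hN n hn
    have hwK : w n ∈ K := by
      rw [hK, Metric.mem_closedBall, Real.dist_eq]; exact h2.le
    have hmv := hconv.norm_image_sub_le_of_norm_deriv_le (f := ψ n)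
      (fun x _ => ((hC1 n).differentiable one_ne_zero).differentiableAt)
      (fun x hx => by simpa [Real.norm_eq_abs] using hD1 n hn x hx) hwK hy
    rw [Real.norm_eq_abs, Real.norm_eq_abs] at hmv
    have hdist : |y - w n| ≤ 2 * δ := by
      have hyb := abs_le.1 (by rw [hK, Metric.mem_closedBall, Real.dist_eq] at hy; exact hy)
      have hwb := abs_le.1 h2.le
      exact abs_le.2 ⟨by linarith [hyb.1, hwb.2], by linarith [hyb.2, hwb.1]⟩
    have : |ψ n y - ψ n (w n)| ≤ 1 * (2 * δ) := hmv.trans (by nlinarith [abs_nonneg (y - w n)])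
    calc |ψ n y| = |ψ n (w n) + (ψ n y - ψ n (w n))| := by ring_nf
    _ ≤ |ψ n (w n)| + |ψ n y - ψ n (w n)| := abs_add_le _ _
    _ ≤ 1 + 1 * (2 * δ) := by linarith
    _ ≤ 2 := by linarith
  -- assemble the constant
  refine ⟨δ, δpos, max M 2, by positivity, N, ?_, ?_, ?_⟩
  · intro n hn y hy
    have hyK : y ∈ K := Metric.ball_subset_closedBall hy
    exact ⟨(hψb n hn y hyK).trans (le_max_right _ _),
      (hD1 n hn y hyK).trans (hM1.trans (le_max_left _ _))⟩
  · intro n hn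
    filter_upwards [hae2 n hn] with x hx hmem
    exact (hx (Metric.ball_subset_closedBall hmem)).trans (le_max_left _ _)
  -- the compactness argument
  haveI : CompactSpace K := isCompact_iff_compactSpace.mp (isCompact_closedBall _ _)
  set M' : ℝ≥0 := M.toNNReal with hM'
  have hM'co : (M' : ℝ) = M := Real.coe_toNNReal M hM0
  set S : Set C(K, ℝ) := {f | LipschitzWith M' ⇑f ∧ ∀ x, |f x| ≤ 1} with hS
  have hS1 : IsCompact (ContinuousMap.toFun '' S) := by
    have himg : ContinuousMap.toFun '' S
        = {g : K → ℝ | LipschitzWith M' g} ∩ ⋂ x : K, {g : K → ℝ | |g x| ≤ 1} := by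
      ext g
      constructor
      · rintro ⟨f, hf, rfl⟩
        exact ⟨hf.1, mem_iInter.2 fun x => hf.2 x⟩
      · intro hg
        exact ⟨⟨g, hg.1.continuous⟩, ⟨hg.1, fun x => mem_iInter.1 hg.2 x⟩, rfl⟩
    rw [himg]
    apply IsCompact.of_isClosed_subset
      (isCompact_univ_pi (fun _ : K => isCompact_Icc (a := (-1 : ℝ)) (b := 1)))
    · exact (isClosed_setOf_lipschitzWith M').inter (isClosed_iInter fun x =>
        isClosed_le (continuous_abs.comp (continuous_apply x)) continuous_const)
    · intro g hg
      rw [mem_univ_pi]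
      intro x
      exact abs_le.1 (mem_iInter.1 hg.2 x)
  have hS2 : Equicontinuous ((↑) : S → K → ℝ) := by
    apply Metric.equicontinuous_of_continuity_modulus (fun d => M * d)
    · have : Tendsto (fun d : ℝ => M * d) (nhds 0) (nhds (M * 0)) :=
        (continuous_const.mul continuous_id).tendsto 0
      simpa using this
    · intro x y i
      have := i.2.1.dist_le_mul x y
      rwa [hM'co] at this
  have hScpt : IsCompact S := ArzelaAscoli.isCompact_of_equicontinuous S hS1 hS2
  set seq : ℕ → C(K, ℝ) := fun k =>
    ⟨fun x => deriv (ψ (k + N)) x, ((hC1 _).continuous_deriv le_rfl).comp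
      continuous_subtype_val⟩ with hseq
  have hseqS : ∀ k, seq k ∈ S := by
    intro k
    constructor
    · have := hlipM (k + N) (Nat.le_add_left N k)
      refine LipschitzWith.of_dist_le_mul fun x y => ?_
      rw [Subtype.dist_eq, Real.dist_eq, Real.dist_eq, hM'co]
      exact this x x.2 y y.2
    · exact fun x => hD1 (k + N) (Nat.le_add_left N k) x x.2
  obtain ⟨g, hgS, φ₁, hφ₁, hg⟩ := hScpt.isSeqCompact hseqS
  have hgU : TendstoUniformly (fun i x => seq (φ₁ i) x) ⇑g atTop :=
    ContinuousMap.tendsto_iff_tendstoUniformly.mp hg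
  have hybarK : ybar ∈ K := Metric.mem_closedBall_self δpos.le
  obtain ⟨aval, -, φ₂, hφ₂, hval⟩ := (isCompact_Icc (a := (-2 : ℝ)) (b := 2)).tendsto_subseq
    (x := fun k => ψ (φ₁ k + N) ybar)
    (fun k => abs_le.1 (hψb (φ₁ k + N) (Nat.le_add_left N _) ybar hybarK))
  set φ : ℕ → ℕ := fun k => φ₁ (φ₂ k) + N with hφdef
  have hφ : StrictMono φ := fun a b hab => Nat.add_lt_add_right (hφ₁ (hφ₂ hab)) N
  -- extend g to all of ℝ by projection
  set proj : ℝ → ℝ := fun y => max (ybar - δ) (min y (ybar + δ)) with hprojdef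
  have hproj_mem : ∀ y, proj y ∈ K := by
    intro y
    rw [hKIcc]
    exact ⟨le_max_left _ _, max_le (by linarith) (min_le_right _ _)⟩
  have hproj_cont : Continuous proj := continuous_const.max (continuous_id.min continuous_const)
  have hproj_id : ∀ y ∈ K, proj y = y := by
    intro y hy
    rw [hKIcc] at hy
    rw [hprojdef]
    simp only
    rw [min_eq_left hy.2, max_eq_right hy.1]
  set gext : ℝ → ℝ := fun y => g ⟨proj y, hproj_mem y⟩ with hgext
  have hgext_cont : Continuous gext := g.continuous.comp (hproj_cont.subtype_mk _)
  have hgext_eq : ∀ y (hy : y ∈ K), gext y = g ⟨y, hy⟩ := by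
    intro y hy
    rw [hgext]
    simp only
    congr 1
    exact Subtype.ext (hproj_id y hy)
  set ψb : ℝ → ℝ := fun y => aval + ∫ x in ybar..y, gext x with hψbdef
  have hderiv : ∀ y, HasDerivAt ψb (gext y) y := by
    intro y
    have h1 : HasDerivAt (fun z => ∫ x in ybar..z, gext x) (gext y) y :=
      intervalIntegral.integral_hasDerivAt_right (hgext_cont.intervalIntegrable _ _)
        (hgext_cont.stronglyMeasurableAtFilter _ _) hgext_cont.continuousAt
    simpa [hψbdef] using h1.const_add aval
  have hderiv_eq : deriv ψb = gext := funext fun y => (hderiv y).deriv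
  refine ⟨φ, ψb, M', hφ, ?_, ?_, ?_⟩
  · -- uniform convergence
    rw [Metric.tendstoUniformlyOn_iff]
    intro ε hε
    have hε2 : 0 < ε / 2 := by linarith
    have hε3 : 0 < ε / (2 * (δ + 1)) := by positivity
    have Hval : ∀ᶠ p in atTop, |ψ (φ p) ybar - aval| < ε / 2 := by
      have h1 := Metric.tendsto_nhds.mp hval (ε / 2) hε2
      filter_upwards [h1] with p hp
      rw [Function.comp_apply, Real.dist_eq] at hp
      exact hp
    have Hder : ∀ᶠ p in atTop, ∀ x : K, dist (g x) (seq (φ₁ (φ₂ p)) x) < ε / (2 * (δ + 1)) := by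
      have h1 := Metric.tendstoUniformly_iff.mp hgU (ε / (2 * (δ + 1))) hε3
      exact hφ₂.tendsto_atTop.eventually h1
    filter_upwards [Hval, Hder] with p hp1 hp2
    intro y hy
    have hyK : y ∈ K := Metric.ball_subset_closedBall hy
    have hftcp : ψ (φ p) y = ψ (φ p) ybar + ∫ x in ybar..y, deriv (ψ (φ p)) x := by
      have h1 := intervalIntegral.integral_deriv_eq_sub' (a := ybar) (b := y) (ψ (φ p)) rfl
        (fun x _ => ((hC1 _).differentiable one_ne_zero).differentiableAt)
        (((hC1 _).continuous_deriv le_rfl).continuousOn)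
      rw [h1]; ring
    have hsubK : Ι ybar y ⊆ K := by
      have h1 : Ι ybar y ⊆ uIcc ybar y := Ioc_subset_Icc_self
      exact h1.trans (hconv.ordConnected.uIcc_subset hybarK hyK)
    have hintb : ‖∫ x in ybar..y, (gext x - deriv (ψ (φ p)) x)‖
        ≤ ε / (2 * (δ + 1)) * |y - ybar| := by
      apply intervalIntegral.norm_integral_le_of_norm_le_const
      intro x hx
      have hxK : x ∈ K := hsubK hx
      have h2 : deriv (ψ (φ p)) x = seq (φ₁ (φ₂ p)) ⟨x, hxK⟩ := rfl
      rw [Real.norm_eq_abs, hgext_eq x hxK, h2]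
      have h3 := (hp2 ⟨x, hxK⟩).le
      rwa [Real.dist_eq] at h3
    have hyd : |y - ybar| ≤ δ := by
      rw [hK, Metric.mem_closedBall, Real.dist_eq] at hyK
      exact hyK
    have hsplit : ψb y - ψ (φ p) y
        = (aval - ψ (φ p) ybar) + ∫ x in ybar..y, (gext x - deriv (ψ (φ p)) x) := by
      rw [intervalIntegral.integral_sub (hgext_cont.intervalIntegrable _ _)
        ((((hC1 (φ p)).continuous_deriv le_rfl)).intervalIntegrable _ _), hftcp, hψbdef]
      ring
    rw [Real.dist_eq]
    have hint2 : |∫ x in ybar..y, (gext x - deriv (ψ (φ p)) x)| ≤ ε / (2 * (δ + 1)) * δ := by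
      have h4 : |∫ x in ybar..y, (gext x - deriv (ψ (φ p)) x)|
          ≤ ε / (2 * (δ + 1)) * |y - ybar| := by
        simpa [Real.norm_eq_abs] using hintb
      refine h4.trans ?_
      have := hε3.le
      nlinarith [abs_nonneg (y - ybar)]
    have hlast : ε / (2 * (δ + 1)) * δ < ε / 2 := by
      rw [div_mul_eq_mul_div, div_lt_div_iff₀ (by positivity) two_pos]
      nlinarith
    calc |ψb y - ψ (φ p) y|
        ≤ |aval - ψ (φ p) ybar| + |∫ x in ybar..y, (gext x - deriv (ψ (φ p)) x)| := by
          rw [hsplit]; exact abs_add_le _ _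
      _ < ε / 2 + ε / 2 := by
          have : |aval - ψ (φ p) ybar| = |ψ (φ p) ybar - aval| := abs_sub_comm _ _
          rw [this]
          exact add_lt_add_of_lt_of_le hp1 (hint2.trans hlast.le)
      _ = ε := by ring
  · -- C¹
    have hcd : ContDiff ℝ 1 ψb := contDiff_one_iff_deriv.2
      ⟨fun y => (hderiv y).differentiableAt, by rw [hderiv_eq]; exact hgext_cont⟩
    exact hcd.contDiffOn
  · -- Lipschitz derivative
    rw [hderiv_eq]
    refine LipschitzOnWith.of_dist_le_mul fun x hx y hy => ?_
    have hxK : x ∈ K := Metric.ball_subset_closedBall hx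
    have hyK : y ∈ K := Metric.ball_subset_closedBall hy
    rw [hgext_eq x hxK, hgext_eq y hyK]
    have := hgS.1.dist_le_mul ⟨x, hxK⟩ ⟨y, hyK⟩
    rwa [Subtype.dist_eq] at this
end
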